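/- arXiv:1505.07434 — 6 statements merged into one kernel-verified Lean document; each statement's English description precedes it below -/
import Mathlib

section
/- Augmentation property (core of Lemma 1): if π is a feasible allocation with Z(π) < Z_max, then there exist a feasible allocation π' and a company k0 such that Z(π') = Z(π) + 1, ω(π') k0 = ω(π) k0 + 1, and ω(π') k = ω(π) k for every company k ≠ k0. -/
/-- A feasible allocation: every assigned triple was bid on, every job is
assigned at most once, and capacities are respected. -/
def Feasible {J T K : Type*} [DecidableEq J] [DecidableEq T] [DecidableEq K]
    (b : J → T → K → Prop) (n : K → T → ℕ) (π : Finset (J × T × K)) : Prop :=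
  (∀ x ∈ π, b x.1 x.2.1 x.2.2) ∧
  (∀ j : J, (π.filter (fun x => x.1 = j)).card ≤ 1) ∧
  (∀ (k : K) (t : T), (π.filter (fun x => x.2.1 = t ∧ x.2.2 = k)).card ≤ n k t)

/-- Number of jobs a company `k` receives in allocation `π`. -/
def alloc {J T K : Type*} [DecidableEq K]
    (π : Finset (J × T × K)) (k : K) : ℕ :=
  (π.filter (fun x => x.2.2 = k)).card

/-- Total compensation of an allocation. -/
def cost {J T K : Type*} (c : J → T → K → ℕ) (π : Finset (J × T × K)) : ℕ :=
  ∑ x ∈ π, c x.1 x.2.1 x.2.2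

/-- The maximum number of allocatable jobs. -/
noncomputable def Zmax {J T K : Type*} [DecidableEq J] [DecidableEq T] [DecidableEq K]
    (b : J → T → K → Prop) (n : K → T → ℕ) : ℕ :=
  sSup {z | ∃ π : Finset (J × T × K), Feasible b n π ∧ π.card = z}

/-- The allocation vector of `π` sorted in nondecreasing order. -/
def sortedVec {J T K : Type*} [Fintype K] [DecidableEq K]
    (π : Finset (J × T × K)) : List ℕ :=
  Multiset.sort (Finset.univ.val.map (fun k => alloc π k)) (· ≤ ·)

/-- `π` is a max-lexmin fair maximum allocation. -/
noncomputable def MaxLexminFair {J T K : Type*} [Fintype K]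
    [DecidableEq J] [DecidableEq T] [DecidableEq K]
    (b : J → T → K → Prop) (n : K → T → ℕ) (π : Finset (J × T × K)) : Prop :=
  Feasible b n π ∧ π.card = Zmax b n ∧
    ∀ π' : Finset (J × T × K), Feasible b n π' → π'.card = Zmax b n →
      sortedVec π' = sortedVec π ∨ List.Lex (· < ·) (sortedVec π') (sortedVec π)


lemma job_unique {J T K : Type*} [DecidableEq J] [DecidableEq T] [DecidableEq K]
    {π : Finset (J × T × K)} (h : ∀ j : J, (π.filter (fun x => x.1 = j)).card ≤ 1)
    {x y : J × T × K} (hx : x ∈ π) (hy : y ∈ π) (hxy : x.1 = y.1) : x = y := by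
  have hx' : x ∈ π.filter (fun z => z.1 = y.1) := Finset.mem_filter.2 ⟨hx, hxy⟩
  have hy' : y ∈ π.filter (fun z => z.1 = y.1) := Finset.mem_filter.2 ⟨hy, rfl⟩
  exact Finset.card_le_one.mp (h y.1) x hx' y hy'

lemma card_image_fst {J T K : Type*} [DecidableEq J] [DecidableEq T] [DecidableEq K]
    {π : Finset (J × T × K)} (h : ∀ j : J, (π.filter (fun x => x.1 = j)).card ≤ 1) :
    (π.image Prod.fst).card = π.card := by
  apply Finset.card_image_of_injOn
  intro x hx y hy hxy
  exact job_unique h hx hy hxy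

lemma feasible_augment_aux {J T K : Type*}
    [DecidableEq J] [DecidableEq T] [DecidableEq K]
    (b : J → T → K → Prop) (n : K → T → ℕ) :
    ∀ N : ℕ, ∀ π σ : Finset (J × T × K), Feasible b n π → Feasible b n σ →
      π.card < σ.card → (σ \ π).card ≤ N →
      ∃ (π' : Finset (J × T × K)) (k0 : K), Feasible b n π' ∧
        π'.card = π.card + 1 ∧ alloc π' k0 = alloc π k0 + 1 ∧
        ∀ k : K, k ≠ k0 → alloc π' k = alloc π k := by
  intro N
  induction N with
  | zero =>
    intro π σ hπ hσ hcard hN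
    exfalso
    have : σ \ π = ∅ := Finset.card_eq_zero.mp (Nat.le_zero.mp hN)
    have hsub : σ ⊆ π := Finset.sdiff_eq_empty_iff_subset.mp this
    exact absurd (Finset.card_le_card hsub) (by omega)
  | succ N ih =>
    intro π σ hπ hσ hcard hN
    obtain ⟨hπb, hπj, hπc⟩ := hπ
    obtain ⟨hσb, hσj, hσc⟩ := hσ
    -- find a job assigned by σ but not by π
    have himg : (π.image Prod.fst).card < (σ.image Prod.fst).card := by
      rw [card_image_fst hπj, card_image_fst hσj]; exact hcard
    have hnsub : ¬ (σ.image Prod.fst ⊆ π.image Prod.fst) :=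
      fun h => absurd (Finset.card_le_card h) (by omega)
    obtain ⟨j0, hj0σ, hj0π⟩ := Finset.not_subset.mp hnsub
    obtain ⟨x0, hx0σ, hx0j⟩ := Finset.mem_image.mp hj0σ
    set t0 := x0.2.1 with ht0
    set k0 := x0.2.2 with hk0
    have hx0π : x0 ∉ π := fun h => hj0π (Finset.mem_image.2 ⟨x0, h, hx0j⟩)
    have hfree : π.filter (fun x => x.1 = x0.1) = ∅ := by
      apply Finset.filter_eq_empty_iff.mpr
      intro x hx hxj
      exact hj0π (Finset.mem_image.2 ⟨x, hx, hxj.trans hx0j⟩)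
    by_cases hslot : (π.filter (fun x => x.2.1 = t0 ∧ x.2.2 = k0)).card < n k0 t0
    · -- direct augmentation
      refine ⟨insert x0 π, k0, ⟨?_, ?_, ?_⟩, ?_, ?_, ?_⟩
      · intro x hx
        rcases Finset.mem_insert.mp hx with h | h
        · exact h ▸ hσb x0 hx0σ
        · exact hπb x h
      · intro j
        rw [Finset.filter_insert]
        by_cases hj : x0.1 = j
        · rw [if_pos hj, ← hj, hfree]; simp
        · rw [if_neg hj]; exact hπj j
      · intro k t
        rw [Finset.filter_insert]
        by_cases hkt : x0.2.1 = t ∧ x0.2.2 = k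
        · rw [if_pos hkt]
          have hx0f : x0 ∉ π.filter (fun x => x.2.1 = t ∧ x.2.2 = k) := by
            simp [hx0π]
          rw [Finset.card_insert_of_notMem hx0f]
          obtain ⟨h1, h2⟩ := hkt
          rw [← h1, ← h2]
          exact hslot
        · rw [if_neg hkt]; exact hπc k t
      · rw [Finset.card_insert_of_notMem hx0π]
      · unfold alloc
        rw [Finset.filter_insert, if_pos rfl,
          Finset.card_insert_of_notMem (by simp [hx0π])]
      · intro k hk
        unfold alloc
        rw [Finset.filter_insert, if_neg (fun h => hk h.symm)]
    · -- slot is full in π: swap within the slot and recurse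
      push_neg at hslot
      have hfull : (π.filter (fun x => x.2.1 = t0 ∧ x.2.2 = k0)).card = n k0 t0 :=
        le_antisymm (hπc k0 t0) hslot
      -- find x1 in π at this slot, not in σ
      have hexx1 : ∃ x1 ∈ π.filter (fun x => x.2.1 = t0 ∧ x.2.2 = k0), x1 ∉ σ := by
        by_contra hcon
        push_neg at hcon
        have hsub : insert x0 (π.filter (fun x => x.2.1 = t0 ∧ x.2.2 = k0))
            ⊆ σ.filter (fun x => x.2.1 = t0 ∧ x.2.2 = k0) := by
          intro a ha
          rcases Finset.mem_insert.mp ha with h | h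
          · subst h; exact Finset.mem_filter.2 ⟨hx0σ, rfl, rfl⟩
          · exact Finset.mem_filter.2 ⟨hcon a h, (Finset.mem_filter.mp h).2⟩
        have hnm : x0 ∉ π.filter (fun x => x.2.1 = t0 ∧ x.2.2 = k0) := by
          simp [hx0π]
        have := Finset.card_le_card hsub
        rw [Finset.card_insert_of_notMem hnm, hfull] at this
        have := hσc k0 t0
        omega
      obtain ⟨x1, hx1f, hx1σ⟩ := hexx1
      obtain ⟨hx1π, hx1t, hx1k⟩ := Finset.mem_filter.mp hx1f
      have hx01 : x0 ≠ x1 := fun h => hx0π (h ▸ hx1π)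
      have hx0e : x0 ∉ π.erase x1 := fun h => hx0π (Finset.mem_of_mem_erase h)
      set π2 : Finset (J × T × K) := insert x0 (π.erase x1) with hπ2
      have hπ2card : π2.card = π.card := by
        rw [hπ2, Finset.card_insert_of_notMem hx0e, Finset.card_erase_of_mem hx1π]
        have : 0 < π.card := Finset.card_pos.2 ⟨x1, hx1π⟩
        omega
      have hπ2feas : Feasible b n π2 := by
        refine ⟨?_, ?_, ?_⟩
        · intro x hx
          rcases Finset.mem_insert.mp hx with h | h
          · exact h ▸ hσb x0 hx0σ
          · exact hπb x (Finset.mem_of_mem_erase h)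
        · intro j
          rw [hπ2, Finset.filter_insert, Finset.filter_erase]
          by_cases hj : x0.1 = j
          · rw [if_pos hj, ← hj, hfree]; simp
          · rw [if_neg hj]
            exact le_trans (Finset.card_erase_le) (hπj j)
        · intro k t
          rw [hπ2, Finset.filter_insert, Finset.filter_erase]
          by_cases hkt : x0.2.1 = t ∧ x0.2.2 = k
          · rw [if_pos hkt]
            obtain ⟨h1, h2⟩ := hkt
            have hx1f' : x1 ∈ π.filter (fun x => x.2.1 = t ∧ x.2.2 = k) := by
              rw [← h1, ← h2]; exact hx1f
            have hnm : x0 ∉ (π.filter (fun x => x.2.1 = t ∧ x.2.2 = k)).erase x1 := by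
              simp [hx0π]
            rw [Finset.card_insert_of_notMem hnm,
              Finset.card_erase_of_mem hx1f']
            have := hπc k t
            have : 0 < (π.filter (fun x => x.2.1 = t ∧ x.2.2 = k)).card :=
              Finset.card_pos.2 ⟨x1, hx1f'⟩
            omega
          · rw [if_neg hkt]
            exact le_trans (Finset.card_erase_le) (hπc k t)
      have halloc : ∀ k, alloc π2 k = alloc π k := by
        intro k
        unfold alloc
        rw [hπ2, Finset.filter_insert, Finset.filter_erase]
        by_cases hkk : x0.2.2 = k
        · rw [if_pos hkk]
          have hx1f' : x1 ∈ π.filter (fun x => x.2.2 = k) :=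
            Finset.mem_filter.2 ⟨hx1π, hx1k.trans hkk⟩
          have hnm : x0 ∉ (π.filter (fun x => x.2.2 = k)).erase x1 := by
            simp [hx0π]
          rw [Finset.card_insert_of_notMem hnm, Finset.card_erase_of_mem hx1f']
          have : 0 < (π.filter (fun x => x.2.2 = k)).card :=
            Finset.card_pos.2 ⟨x1, hx1f'⟩
          omega
        · rw [if_neg hkk]
          have hx1nm : x1 ∉ π.filter (fun x : J × T × K => x.2.2 = k) := by
            simp only [Finset.mem_filter, not_and]
            intro _ h
            exact hkk ((hx1k.symm.trans h) ▸ rfl)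
          rw [Finset.erase_eq_of_notMem hx1nm]
      -- measure decreases
      have hsd : σ \ π2 = (σ \ π).erase x0 := by
        rw [hπ2, Finset.sdiff_insert]
        congr 1
        ext a
        simp only [Finset.mem_sdiff, Finset.mem_erase]
        constructor
        · rintro ⟨ha, hb⟩
          exact ⟨ha, fun hc => hb ⟨fun h => hx1σ (h ▸ ha), hc⟩⟩
        · rintro ⟨ha, hb⟩
          exact ⟨ha, fun hc => hb hc.2⟩
      have hx0sd : x0 ∈ σ \ π := Finset.mem_sdiff.2 ⟨hx0σ, hx0π⟩
      have hmeas : (σ \ π2).card ≤ N := by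
        rw [hsd, Finset.card_erase_of_mem hx0sd]
        have : 0 < (σ \ π).card := Finset.card_pos.2 ⟨x0, hx0sd⟩
        omega
      obtain ⟨π', k1, hfeas', hcard', hup', hsame'⟩ :=
        ih π2 σ hπ2feas ⟨hσb, hσj, hσc⟩ (hπ2card ▸ hcard) hmeas
      refine ⟨π', k1, hfeas', by rw [hcard', hπ2card], ?_, ?_⟩
      · rw [hup', halloc k1]
      · intro k hk
        rw [hsame' k hk, halloc k]

/-- augmentation property: any feasible allocation that is not
maximum can be augmented by one job, increasing exactly one company's count. -/
theorem feasible_augment {J T K : Type*}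
    [Fintype J] [Fintype T] [Fintype K] [Nonempty J] [Nonempty T] [Nonempty K]
    [DecidableEq J] [DecidableEq T] [DecidableEq K]
    (b : J → T → K → Prop) (n : K → T → ℕ) (π : Finset (J × T × K))
    (hfeas : Feasible b n π) (hlt : π.card < Zmax b n) :
    ∃ (π' : Finset (J × T × K)) (k0 : K), Feasible b n π' ∧
      π'.card = π.card + 1 ∧ alloc π' k0 = alloc π k0 + 1 ∧
      ∀ k : K, k ≠ k0 → alloc π' k = alloc π k := by
  have hne : (0 : ℕ) ∈ {z | ∃ π : Finset (J × T × K), Feasible b n π ∧ π.card = z} :=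
    ⟨∅, ⟨by simp, by simp, by simp⟩, rfl⟩
  have hbdd : BddAbove {z | ∃ π : Finset (J × T × K), Feasible b n π ∧ π.card = z} := by
    refine ⟨Fintype.card (J × T × K), ?_⟩
    rintro z ⟨ρ, _, rfl⟩
    exact Finset.card_le_univ ρ
  have hmem : Zmax b n ∈ {z | ∃ π : Finset (J × T × K), Feasible b n π ∧ π.card = z} :=
    Nat.sSup_mem ⟨0, hne⟩ hbdd
  obtain ⟨σ, hσfeas, hσcard⟩ := hmem
  exact feasible_augment_aux b n ((σ \ π).card) π σ hfeas hσfeas (hσcard ▸ hlt) le_rfl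
end

section
/- Monotonicity and unit sensitivity of the maximum allocation value (used in the progressive-filling IMaxFlow algorithm): writing Z_max(n) for the maximum of Z(π) over allocations feasible with respect to capacities n, if n k t ≤ n' k t for all k and t, then Z_max(n) ≤ Z_max(n'); and if n' is obtained from n by increasing a single entry n k0 t0 by exactly 1, then Z_max(n') ≤ Z_max(n) + 1. -/
lemma zset_nonempty {J T K : Type*} [DecidableEq J] [DecidableEq T] [DecidableEq K]
    (b : J → T → K → Prop) (n : K → T → ℕ) :
    {z | ∃ π : Finset (J × T × K), Feasible b n π ∧ π.card = z}.Nonempty := by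
  exact ⟨0, ∅, ⟨by simp, by simp, by simp⟩, rfl⟩

lemma zset_bdd {J T K : Type*} [Fintype J] [Fintype T] [Fintype K]
    [DecidableEq J] [DecidableEq T] [DecidableEq K]
    (b : J → T → K → Prop) (n : K → T → ℕ) :
    BddAbove {z | ∃ π : Finset (J × T × K), Feasible b n π ∧ π.card = z} := by
  refine ⟨Fintype.card (J × T × K), ?_⟩
  rintro z ⟨π, _, rfl⟩
  exact Finset.card_le_univ π

lemma feasible_subset {J T K : Type*} [DecidableEq J] [DecidableEq T] [DecidableEq K]
    (b : J → T → K → Prop) (n : K → T → ℕ) {π π' : Finset (J × T × K)}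
    (hsub : π' ⊆ π) (h : Feasible b n π) : Feasible b n π' := by
  obtain ⟨h1, h2, h3⟩ := h
  refine ⟨fun x hx => h1 x (hsub hx), fun j => ?_, fun k t => ?_⟩
  · exact le_trans (Finset.card_le_card (Finset.filter_subset_filter _ hsub)) (h2 j)
  · exact le_trans (Finset.card_le_card (Finset.filter_subset_filter _ hsub)) (h3 k t)

/-- monotonicity and unit sensitivity of the maximum allocation
value in the capacities. -/
theorem Zmax_monotone_and_unit_sensitive {J T K : Type*}
    [Fintype J] [Fintype T] [Fintype K] [Nonempty J] [Nonempty T] [Nonempty K]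
    [DecidableEq J] [DecidableEq T] [DecidableEq K]
    (b : J → T → K → Prop) (n n' : K → T → ℕ) :
    ((∀ (k : K) (t : T), n k t ≤ n' k t) → Zmax b n ≤ Zmax b n') ∧
    (∀ (k0 : K) (t0 : T), n' k0 t0 = n k0 t0 + 1 →
      (∀ (k : K) (t : T), ¬(k = k0 ∧ t = t0) → n' k t = n k t) →
      Zmax b n' ≤ Zmax b n + 1) := by
  constructor
  · intro hle
    apply csSup_le (zset_nonempty b n)
    rintro z ⟨π, ⟨h1, h2, h3⟩, rfl⟩
    exact le_csSup (zset_bdd b n') ⟨π, ⟨h1, h2, fun k t => (h3 k t).trans (hle k t)⟩, rfl⟩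
  · intro k0 t0 h0 hrest
    apply csSup_le (zset_nonempty b n')
    rintro z ⟨π, hfeas, rfl⟩
    obtain ⟨h1, h2, h3⟩ := hfeas
    by_cases hc : (π.filter (fun x => x.2.1 = t0 ∧ x.2.2 = k0)).card ≤ n k0 t0
    · have : π.card ≤ Zmax b n := by
        refine le_csSup (zset_bdd b n) ⟨π, ⟨h1, h2, fun k t => ?_⟩, rfl⟩
        by_cases hk : k = k0 ∧ t = t0
        · obtain ⟨rfl, rfl⟩ := hk; exact hc
        · exact (h3 k t).trans_eq (hrest k t hk)
      omega
    · push_neg at hc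
      have hpos : 0 < (π.filter (fun x => x.2.1 = t0 ∧ x.2.2 = k0)).card := by omega
      obtain ⟨x, hx⟩ := Finset.card_pos.mp hpos
      have hxπ : x ∈ π := Finset.mem_filter.mp hx |>.1
      have hfeas' : Feasible b n (π.erase x) := by
        have := feasible_subset b n' (Finset.erase_subset x π) ⟨h1, h2, h3⟩
        obtain ⟨h1', h2', h3'⟩ := this
        refine ⟨h1', h2', fun k t => ?_⟩
        by_cases hk : k = k0 ∧ t = t0
        · obtain ⟨rfl, rfl⟩ := hk
          have heq : (π.erase x).filter (fun x => x.2.1 = t ∧ x.2.2 = k)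
              = (π.filter (fun x => x.2.1 = t ∧ x.2.2 = k)).erase x := by
            ext y; simp [Finset.mem_erase, Finset.mem_filter]; tauto
          rw [heq, Finset.card_erase_of_mem hx]
          have := h3 k t
          omega
        · exact (h3' k t).trans_eq (hrest k t hk)
      have hz : (π.erase x).card ≤ Zmax b n :=
        le_csSup (zset_bdd b n) ⟨π.erase x, hfeas', rfl⟩
      rw [Finset.card_erase_of_mem hxπ] at hz
      omega
end

section
/- Robin Hood transfer increases lexmin fairness (core of the proof of Lemma 5): let K be a finite type, v : K → ℕ, and i ≠ j companies with v i + 2 ≤ v j. Define v' by v' i = v i + 1, v' j = v j − 1, and v' k = v k for k ∉ {i,j}. Then Σ_k v' k = Σ_k v k, and the list of values of v sorted in nondecreasing order is strictly lexicographically smaller (with respect to List.Lex (<)) than the list of values of v' sorted in nondecreasing order. -/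
lemma robin_key : ∀ (s t : List ℕ), s.Pairwise (· ≤ ·) → t.Pairwise (· ≤ ·) →
    ∀ (a b : ℕ) (m : Multiset ℕ), a + 2 ≤ b →
    (s : Multiset ℕ) = a ::ₘ b ::ₘ m →
    (t : Multiset ℕ) = (a + 1) ::ₘ (b - 1) ::ₘ m →
    List.Lex (· < ·) s t := by
  intro s
  induction s with
  | nil =>
    intro t _ _ a b m _ hs _
    exact absurd hs.symm (by simp)
  | cons x s' IH =>
    intro t hs ht a b m hab hseq hteq
    cases t with
    | nil => exact absurd hteq.symm (by simp)
    | cons y t' =>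
      obtain ⟨hxs', hs'⟩ := List.pairwise_cons.mp hs
      obtain ⟨hyt', ht'⟩ := List.pairwise_cons.mp ht
      have hx_le : ∀ z ∈ (a ::ₘ b ::ₘ m), x ≤ z := by
        rw [← hseq]
        intro z hz
        rcases (by simpa using hz : z = x ∨ z ∈ s') with rfl | hz
        · exact le_refl _
        · exact hxs' z hz
      have hxa : x ≤ a := hx_le a (Multiset.mem_cons_self _ _)
      have hy : y ∈ ((a + 1) ::ₘ (b - 1) ::ₘ m) := by
        rw [← hteq]; simp
      rcases Multiset.mem_cons.mp hy with rfl | hy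
      · exact List.Lex.rel (by omega)
      rcases Multiset.mem_cons.mp hy with rfl | hym
      · exact List.Lex.rel (by omega)
      · have hxy : x ≤ y := hx_le y (Multiset.mem_cons_of_mem (Multiset.mem_cons_of_mem hym))
        rcases lt_or_eq_of_le hxy with h | rfl
        · exact List.Lex.rel h
        · obtain ⟨m', rfl⟩ := Multiset.exists_cons_of_mem hym
          have hs2 : (s' : Multiset ℕ) = a ::ₘ b ::ₘ m' := by
            have : (x ::ₘ (s' : Multiset ℕ)) = x ::ₘ (a ::ₘ b ::ₘ m') := by
              rw [show ((x :: s' : List ℕ) : Multiset ℕ) = x ::ₘ (s' : Multiset ℕ) from rfl] at hseq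
              rw [hseq]
              conv_rhs => rw [Multiset.cons_swap x a, Multiset.cons_swap x b]
            exact (Multiset.cons_inj_right x).mp this
          have ht2 : (t' : Multiset ℕ) = (a + 1) ::ₘ (b - 1) ::ₘ m' := by
            have : (x ::ₘ (t' : Multiset ℕ)) = x ::ₘ ((a + 1) ::ₘ (b - 1) ::ₘ m') := by
              rw [show ((x :: t' : List ℕ) : Multiset ℕ) = x ::ₘ (t' : Multiset ℕ) from rfl] at hteq
              rw [hteq]
              conv_rhs => rw [Multiset.cons_swap x (a + 1), Multiset.cons_swap x (b - 1)]
            exact (Multiset.cons_inj_right x).mp this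
          exact List.Lex.cons (IH t' hs' ht' a b m' hab hs2 ht2)

/-- The list of values of `v : K → ℕ` sorted in nondecreasing order. -/
def sortedList {K : Type*} [Fintype K] (v : K → ℕ) : List ℕ :=
  Multiset.sort (Finset.univ.val.map v) (· ≤ ·)

/-- a Robin Hood transfer (moving one unit from a company `j` to a
company `i` that has at least two fewer units) preserves the total sum and
strictly increases the sorted vector in the lexicographic order. -/
theorem robin_hood_transfer {K : Type*} [Fintype K] [DecidableEq K]
    (v v' : K → ℕ) (i j : K) (hij : i ≠ j) (hgap : v i + 2 ≤ v j)
    (hi : v' i = v i + 1) (hj : v' j = v j - 1)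
    (hother : ∀ k : K, k ∉ ({i, j} : Set K) → v' k = v k) :
    (∑ k : K, v' k = ∑ k : K, v k) ∧
      List.Lex (· < ·) (sortedList v) (sortedList v') := by
  set U : Multiset K := Finset.univ.val with hU
  have hnodup : U.Nodup := Finset.univ.nodup
  set m₀ : Multiset K := (U.erase i).erase j with hm₀
  have hjmem : j ∈ U.erase i :=
    (Multiset.mem_erase_of_ne hij.symm).mpr (Finset.mem_univ j)
  have hUeq : U = i ::ₘ j ::ₘ m₀ := by
    rw [hm₀, Multiset.cons_erase hjmem, Multiset.cons_erase (Finset.mem_univ i)]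
  have hne : ∀ k ∈ m₀, k ≠ i ∧ k ≠ j := by
    intro k hk
    constructor
    · rintro rfl
      exact (Multiset.Nodup.notMem_erase hnodup) (Multiset.mem_of_mem_erase hk)
    · rintro rfl
      exact (Multiset.Nodup.notMem_erase (hnodup.erase i)) hk
  have hmap' : m₀.map v' = m₀.map v := by
    refine Multiset.map_congr rfl ?_
    intro k hk
    exact hother k (by
      obtain ⟨h1, h2⟩ := hne k hk
      simp [Set.mem_insert_iff, h1, h2])
  have hMv : U.map v = v i ::ₘ v j ::ₘ m₀.map v := by
    rw [hUeq]; simp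
  have hMv' : U.map v' = (v i + 1) ::ₘ (v j - 1) ::ₘ m₀.map v := by
    rw [hUeq]; simp [hi, hj, hmap']
  constructor
  · have h1 : ∑ k : K, v' k = (U.map v').sum := rfl
    have h2 : ∑ k : K, v k = (U.map v).sum := rfl
    rw [h1, h2, hMv, hMv', Multiset.sum_cons, Multiset.sum_cons,
      Multiset.sum_cons, Multiset.sum_cons]
    omega
  · refine robin_key _ _ (Multiset.pairwise_sort _ _) (Multiset.pairwise_sort _ _)
      (v i) (v j) (m₀.map v) hgap ?_ ?_
    · rw [sortedList, Multiset.sort_eq]; exact hMv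
    · rw [sortedList, Multiset.sort_eq]; exact hMv'
end

section
/- Fairness-improving exchange at the allocation level: let π and π' be feasible allocations with Z(π) = Z(π') = Z_max, and suppose there are companies i ≠ j with ω(π) i + 2 ≤ ω(π) j such that ω(π') i = ω(π) i + 1, ω(π') j = ω(π) j − 1, and ω(π') k = ω(π) k for all other companies k. Then π is not max-lexmin fair. -/
private lemma lex_of_count_aux (c : ℕ) : ∀ (l l' : List ℕ), l.length = l'.length →
    l.Pairwise (· ≤ ·) → l'.Pairwise (· ≤ ·) →
    (∀ u, u < c → l.count u = l'.count u) → l'.count c < l.count c →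
    List.Lex (· < ·) l l'
  | [], [], _, _, _, _, hc => by simp at hc
  | [], x' :: l', hlen, _, _, _, _ => by simp at hlen
  | x :: l, [], hlen, _, _, _, _ => by simp at hlen
  | x :: l, x' :: l', hlen, hs, hs', hu, hc => by
    rcases lt_trichotomy x x' with h | h | h
    · exact List.Lex.rel h
    · subst h
      refine List.Lex.cons (lex_of_count_aux c l l' (by simpa using hlen)
        hs.of_cons hs'.of_cons (fun u hu' => ?_) ?_)
      · have := hu u hu'
        by_cases hx : x = u <;> simp [List.count_cons, hx] at this ⊢ <;> omega
      · by_cases hx : x = c <;> simp [List.count_cons, hx] at hc ⊢ <;> omega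
    · exfalso
      rcases lt_or_ge x' c with h' | h'
      · have h0 : (x :: l).count x' = 0 := by
          rw [List.count_eq_zero]
          intro hmem
          rcases List.mem_cons.mp hmem with rfl | hmem
          · exact lt_irrefl _ h
          · exact absurd (List.rel_of_pairwise_cons hs hmem) (not_le.mpr h)
        have h1 : 0 < (x' :: l').count x' := by simp [List.count_cons]
        have := hu x' h'
        omega
      · have h0 : (x :: l).count c = 0 := by
          rw [List.count_eq_zero]
          intro hmem
          rcases List.mem_cons.mp hmem with rfl | hmem
          · omega
          · have := List.rel_of_pairwise_cons hs hmem; omega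
        omega

private lemma count_sortedVec_aux {J T K : Type*} [Fintype K] [DecidableEq K]
    (π : Finset (J × T × K)) (u : ℕ) :
    (sortedVec π).count u = (Finset.univ.filter (fun k => u = alloc π k)).card := by
  have h1 : (sortedVec π).count u
      = Multiset.count u (Finset.univ.val.map (fun k => alloc π k)) := by
    rw [sortedVec, ← Multiset.coe_count, Multiset.sort_eq]
  rw [h1, Multiset.count_map, Finset.card, Finset.filter_val]

/-- fairness-improving exchange at the allocation level: if a
Robin-Hood transfer between two companies is realizable by another feasible
maximum allocation, then the original allocation is not max-lexmin fair. -/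
theorem not_maxLexminFair_of_exchange {J T K : Type*}
    [Fintype J] [Fintype T] [Fintype K] [Nonempty J] [Nonempty T] [Nonempty K]
    [DecidableEq J] [DecidableEq T] [DecidableEq K]
    (b : J → T → K → Prop) (n : K → T → ℕ) (π π' : Finset (J × T × K))
    (hfeas : Feasible b n π) (hfeas' : Feasible b n π')
    (hmax : π.card = Zmax b n) (hmax' : π'.card = Zmax b n)
    (i j : K) (hij : i ≠ j) (hgap : alloc π i + 2 ≤ alloc π j)
    (hi : alloc π' i = alloc π i + 1) (hj : alloc π' j = alloc π j - 1)
    (hother : ∀ k : K, k ≠ i → k ≠ j → alloc π' k = alloc π k) :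
    ¬ MaxLexminFair b n π := by
  intro hML
  have hlex : List.Lex (· < ·) (sortedVec π) (sortedVec π') := by
    apply lex_of_count_aux (alloc π i)
    · simp [sortedVec]
    · exact Multiset.pairwise_sort _ _
    · exact Multiset.pairwise_sort _ _
    · intro u hu
      rw [count_sortedVec_aux, count_sortedVec_aux]
      congr 1
      apply Finset.filter_congr
      intro k _
      by_cases hki : k = i
      · subst hki; rw [hi]; constructor <;> (intro; omega)
      · by_cases hkj : k = j
        · subst hkj; rw [hj]; constructor <;> (intro; omega)
        · rw [hother k hki hkj]
    · rw [count_sortedVec_aux, count_sortedVec_aux]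
      apply Finset.card_lt_card
      constructor
      · intro k hk
        simp only [Finset.mem_filter, Finset.mem_univ, true_and] at hk ⊢
        by_cases hki : k = i
        · subst hki; omega
        · by_cases hkj : k = j
          · subst hkj; omega
          · rw [hother k hki hkj] at hk; exact hk
      · intro hsub
        have hi' : i ∈ Finset.univ.filter (fun k => alloc π i = alloc π k) := by
          simp
        have := hsub hi'
        simp only [Finset.mem_filter, Finset.mem_univ, true_and] at this
        omega
  rcases hML.2.2 π' hfeas' hmax' with heq | hlex'
  · rw [heq] at hlex
    exact (List.Lex.asymm (· < ·)).asymm _ _ hlex hlex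
  · exact (List.Lex.asymm (· < ·)).asymm _ _ hlex hlex'
end

section
/- Extension to the dummy-augmented instance (the other direction of Lemma 6): every feasible allocation π of P with Z(π) = Z_max whose sorted vector equals φ_f extends to a feasible allocation π' of P' containing π such that π' assigns every dummy job of D, Z(π') = Z_max + |D|, and cost(π') = cost(π). -/
/-! ## The dummy-augmented instance `P'` of Section 3.2.

Given the max-lexmin fair sorted vector `φf = (φ_1 ≤ … ≤ φ_|K|)` of `P`,
we add `L = φ_|K| - φ_1` dummy layers; layer `l` (`0`-indexed) carries one
dummy time and `#{i : φ_i < φ_1 + l + 1}` dummy jobs of cost `0` that every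
company bids on with capacity `1` per dummy time.  In `P'` each company may
receive at most `φ_|K|` jobs in total. -/

/-- Number `L` of dummy layers: largest minus smallest entry of `φf`. -/
def Ldim (φf : List ℕ) : ℕ := φf.getLast! - φf.head!

/-- Number of dummy jobs in (0-indexed) layer `l`: the number of entries of
`φf` smaller than `φ_1 + (l + 1)`. -/
def layerSize (φf : List ℕ) (l : ℕ) : ℕ :=
  (φf.filter (fun x => x < φf.head! + l + 1)).length

/-- The finite type of dummy jobs: layer `l` carries `layerSize φf l` jobs. -/
abbrev Dummy (φf : List ℕ) : Type := (l : Fin (Ldim φf)) × Fin (layerSize φf l)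

/-- Bids of `P'`: the original bids on real jobs at real times, plus a bid of
every company on every dummy job of layer `l` at the dummy time of layer `l`. -/
def bidAug {J T K : Type*} (b : J → T → K → Prop) (φf : List ℕ) :
    (J ⊕ Dummy φf) → (T ⊕ Fin (Ldim φf)) → K → Prop
  | Sum.inl j, Sum.inl t, k => b j t k
  | Sum.inr d, Sum.inr l, _ => d.1 = l
  | _, _, _ => False

/-- Costs of `P'`: original costs on real triples, `0` on dummy triples. -/
def costAug {J T K : Type*} (c : J → T → K → ℕ) (φf : List ℕ) :
    (J ⊕ Dummy φf) → (T ⊕ Fin (Ldim φf)) → K → ℕ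
  | Sum.inl j, Sum.inl t, k => c j t k
  | _, _, _ => 0

/-- Capacities of `P'`: original capacities at real times, capacity `1` for
every company at every dummy time. -/
def capAug {T K : Type*} (n : K → T → ℕ) (φf : List ℕ) :
    K → (T ⊕ Fin (Ldim φf)) → ℕ :=
  fun k t => match t with
  | Sum.inl t => n k t
  | Sum.inr _ => 1

/-- Feasibility for `P'`: feasibility for the augmented bids and capacities,
together with the requirement that each company receives at most `φ_|K|`
(the largest entry of `φf`) jobs in total. -/
def FeasibleAug {J T K : Type*} [DecidableEq J] [DecidableEq T] [DecidableEq K]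
    (b : J → T → K → Prop) (n : K → T → ℕ) (φf : List ℕ)
    (π' : Finset ((J ⊕ Dummy φf) × (T ⊕ Fin (Ldim φf)) × K)) : Prop :=
  Feasible (bidAug b φf) (capAug n φf) π' ∧ ∀ k : K, alloc π' k ≤ φf.getLast!

/-- The maximum number of allocatable jobs in `P'`. -/
noncomputable def ZmaxAug {J T K : Type*} [DecidableEq J] [DecidableEq T] [DecidableEq K]
    (b : J → T → K → Prop) (n : K → T → ℕ) (φf : List ℕ) : ℕ :=
  sSup {z | ∃ π' : Finset ((J ⊕ Dummy φf) × (T ⊕ Fin (Ldim φf)) × K),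
    FeasibleAug b n φf π' ∧ π'.card = z}

/-- Real restriction of an allocation of `P'`: the triples whose job lies in
`J` (feasibility forces their time to lie in `T`), viewed in `J × T × K`. -/
def restrict {J T K D T' : Type*} [DecidableEq J] [DecidableEq T] [DecidableEq K]
    (π' : Finset ((J ⊕ D) × (T ⊕ T') × K)) : Finset (J × T × K) :=
  π'.filterMap
    (fun x => match x with
      | (Sum.inl j, Sum.inl t, k) => some (j, t, k)
      | _ => none)
    (by rintro ⟨j₁ | d₁, t₁ | l₁, k₁⟩ ⟨j₂ | d₂, t₂ | l₂, k₂⟩ x h₁ h₂ <;>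
          simp_all <;> subst h₁ <;> simp_all)

/-- The embedding of real triples into the triples of `P'`. -/
def embTriple {J T K D T' : Type*} (x : J × T × K) : (J ⊕ D) × (T ⊕ T') × K :=
  (Sum.inl x.1, Sum.inl x.2.1, x.2.2)



section Helpers

lemma sorted_head!_le' {l : List ℕ} (hs : l.Pairwise (· ≤ ·)) {x : ℕ} (hx : x ∈ l) :
    l.head! ≤ x := by
  cases l with
  | nil => simp at hx
  | cons a tl =>
    rcases List.mem_cons.1 hx with rfl | hx
    · simp
    · simpa using (List.pairwise_cons.1 hs).1 x hx

lemma sorted_le_getLast?' {l : List ℕ} (hs : l.Pairwise (· ≤ ·)) :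
    ∀ x ∈ l, ∀ y, l.getLast? = some y → x ≤ y := by
  induction l with
  | nil => simp
  | cons b tl ih =>
    rcases List.pairwise_cons.1 hs with ⟨hb, hs'⟩
    intro x hx y hy
    cases tl with
    | nil =>
      simp at hx hy; omega
    | cons c tl' =>
      rw [List.getLast?_cons_cons] at hy
      rcases List.mem_cons.1 hx with rfl | hx
      · exact le_trans (hb c (by simp)) (ih hs' c (by simp) y hy)
      · exact ih hs' x hx y hy

lemma sorted_le_getLast!' {l : List ℕ} (hs : l.Pairwise (· ≤ ·)) {x : ℕ} (hx : x ∈ l) :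
    x ≤ l.getLast! := by
  have hne : l ≠ [] := List.ne_nil_of_mem hx
  have h := List.getLast?_eq_getLast_of_ne_nil hne
  rw [List.getLast!_of_getLast? h]
  exact sorted_le_getLast?' hs x hx _ h

lemma card_filter_fin_le' (L m : ℕ) :
    (Finset.univ.filter (fun l : Fin L => m ≤ (l : ℕ))).card = L - m := by
  classical
  have h1 : (Finset.univ.filter (fun l : Fin L => m ≤ (l : ℕ))).card
      = ((Finset.range L).filter (fun x => m ≤ x)).card := by
    rw [← Finset.card_image_of_injective _ Fin.val_injective]
    congr 1
    ext x
    simp only [Finset.mem_image, Finset.mem_filter, Finset.mem_univ, true_and,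
      Finset.mem_range]
    constructor
    · rintro ⟨l, hl, rfl⟩; exact ⟨l.isLt, hl⟩
    · rintro ⟨hx, hm⟩; exact ⟨⟨x, hx⟩, hm, rfl⟩
  rw [h1, Finset.range_eq_Ico, Finset.Ico_filter_le_of_left_le (Nat.zero_le m),
    Nat.card_Ico]

end Helpers

/-- extension direction of Lemma 6: every feasible maximum
allocation of `P` whose sorted vector equals `φf` extends to a feasible
allocation of the dummy-augmented instance `P'` that contains it, assigns
every dummy job, allocates `Z_max + |D|` jobs, and has the same cost. -/
theorem extend_to_augmented {J T K : Type*}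
    [Fintype J] [Fintype T] [Fintype K] [Nonempty J] [Nonempty T] [Nonempty K]
    [DecidableEq J] [DecidableEq T] [DecidableEq K]
    (b : J → T → K → Prop) (c : J → T → K → ℕ) (n : K → T → ℕ)
    (φf : List ℕ) (hφf : ∃ π₀ : Finset (J × T × K),
      MaxLexminFair b n π₀ ∧ sortedVec π₀ = φf)
    (π : Finset (J × T × K)) (hfeas : Feasible b n π)
    (hmax : π.card = Zmax b n) (hsort : sortedVec π = φf) :
    ∃ π' : Finset ((J ⊕ Dummy φf) × (T ⊕ Fin (Ldim φf)) × K),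
      FeasibleAug b n φf π' ∧
      π.image (embTriple (D := Dummy φf) (T' := Fin (Ldim φf))) ⊆ π' ∧
      (∀ d : Dummy φf, ∃ x ∈ π', x.1 = Sum.inr d) ∧
      π'.card = Zmax b n + Fintype.card (Dummy φf) ∧
      cost (costAug c φf) π' = cost c π := by
  classical
  -- basic facts about φf
  have hmul : (↑φf : Multiset ℕ) = Finset.univ.val.map (alloc π) := by
    rw [← hsort]; exact Multiset.sort_eq (Finset.univ.val.map (alloc π)) (· ≤ ·)
  have hsorted : φf.Pairwise (· ≤ ·) := by
    rw [← hsort]; exact Multiset.pairwise_sort (Finset.univ.val.map (alloc π)) (· ≤ ·)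
  have hmem : ∀ k : K, alloc π k ∈ φf := by
    intro k
    rw [← Multiset.mem_coe, hmul]
    exact Multiset.mem_map.2 ⟨k, by simp, rfl⟩
  set H := φf.head! with hHdef
  set M := φf.getLast! with hMdef
  have hH : ∀ k, H ≤ alloc π k := fun k => sorted_head!_le' hsorted (hmem k)
  have hM : ∀ k, alloc π k ≤ M := fun k => sorted_le_getLast!' hsorted (hmem k)
  have hLdim : Ldim φf = M - H := rfl
  -- the companies eligible for layer l
  set S : Fin (Ldim φf) → Finset K :=
    fun l => Finset.univ.filter (fun k => alloc π k < H + l + 1) with hSdef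
  have hScard : ∀ l : Fin (Ldim φf), (S l).card = layerSize φf l := by
    intro l
    have h1 : layerSize φf l
        = Multiset.countP (fun x => x < H + l + 1) (↑φf : Multiset ℕ) := by
      simp [layerSize, Multiset.coe_countP, List.countP_eq_length_filter]
      rfl
    rw [h1, hmul, Multiset.countP_map]
    rw [Finset.card_def, Finset.filter_val]
  -- the assignment of dummy jobs to companies
  set f : Dummy φf → K :=
    fun d => ((S d.1).equivFin.symm (Fin.cast (hScard d.1).symm d.2) : K) with hfdef
  have hfS : ∀ d : Dummy φf, f d ∈ S d.1 := fun d =>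
    ((S d.1).equivFin.symm (Fin.cast (hScard d.1).symm d.2)).2
  have hfinj : ∀ (l : Fin (Ldim φf)) (i₁ i₂ : Fin (layerSize φf l)),
      f ⟨l, i₁⟩ = f ⟨l, i₂⟩ → i₁ = i₂ := by
    intro l i₁ i₂ h
    have h2 := Subtype.coe_injective h
    have h3 := (S l).equivFin.symm.injective h2
    exact Fin.cast_injective _ h3
  set g : Dummy φf → ((J ⊕ Dummy φf) × (T ⊕ Fin (Ldim φf)) × K) :=
    fun d => (Sum.inr d, Sum.inr d.1, f d) with hgdef
  have hginj : Function.Injective g := by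
    intro d₁ d₂ h
    have := congrArg Prod.fst h
    simpa [hgdef] using this
  have hfinj' : ∀ d₁ d₂ : Dummy φf, d₁.1 = d₂.1 → f d₁ = f d₂ → d₁ = d₂ := by
    rintro ⟨l₁, i₁⟩ ⟨l₂, i₂⟩ h hf
    obtain rfl : l₁ = l₂ := h
    simp only [Sigma.mk.inj_iff, heq_eq_eq, true_and]
    exact hfinj l₁ i₁ i₂ hf
  have hembinj : Function.Injective (embTriple (J := J) (T := T) (K := K)
      (D := Dummy φf) (T' := Fin (Ldim φf))) := by
    rintro ⟨a, b, c⟩ ⟨a', b', c'⟩ h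
    simp only [embTriple, Prod.mk.injEq, Sum.inl.injEq] at h
    simp [h.1, h.2.1, h.2.2]
  set A : Finset ((J ⊕ Dummy φf) × (T ⊕ Fin (Ldim φf)) × K) :=
    π.image (embTriple (D := Dummy φf) (T' := Fin (Ldim φf))) with hAdef
  set B : Finset ((J ⊕ Dummy φf) × (T ⊕ Fin (Ldim φf)) × K) :=
    (Finset.univ : Finset (Dummy φf)).image g with hBdef
  have hdisj : Disjoint A B := by
    rw [Finset.disjoint_left]
    intro x hA hB
    obtain ⟨y, _, rfl⟩ := Finset.mem_image.1 hA
    obtain ⟨d, _, hgd⟩ := Finset.mem_image.1 hB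
    simp [hgdef, embTriple, Prod.ext_iff] at hgd
  refine ⟨A ∪ B, ⟨⟨?_, ?_, ?_⟩, ?_⟩, Finset.subset_union_left, ?_, ?_, ?_⟩
  · -- bids
    intro x hx
    rcases Finset.mem_union.1 hx with hA | hB
    · obtain ⟨y, hy, rfl⟩ := Finset.mem_image.1 hA
      exact hfeas.1 y hy
    · obtain ⟨d, _, rfl⟩ := Finset.mem_image.1 hB
      simp [hgdef, bidAug]
  · -- each job at most once
    intro j
    rw [Finset.filter_union]
    refine le_trans (Finset.card_union_le _ _) ?_
    cases j with
    | inl j0 =>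
      have hBe : B.filter (fun x => x.1 = Sum.inl j0) = ∅ := by
        rw [Finset.filter_eq_empty_iff]
        intro x hx
        obtain ⟨d, _, rfl⟩ := Finset.mem_image.1 hx
        simp [hgdef]
      have hAf : A.filter (fun x => x.1 = Sum.inl j0)
          = (π.filter (fun y => y.1 = j0)).image
              (embTriple (D := Dummy φf) (T' := Fin (Ldim φf))) := by
        ext x
        simp only [hAdef, Finset.mem_filter, Finset.mem_image, embTriple]
        constructor
        · rintro ⟨⟨y, hy, rfl⟩, hj⟩
          exact ⟨y, ⟨hy, by simpa using hj⟩, rfl⟩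
        · rintro ⟨y, ⟨hy, hj⟩, rfl⟩
          exact ⟨⟨y, hy, rfl⟩, by simpa using hj⟩
      rw [hBe, hAf, Finset.card_image_of_injective _ hembinj]
      simpa using hfeas.2.1 j0
    | inr d =>
      have hAe : A.filter (fun x => x.1 = Sum.inr d) = ∅ := by
        rw [Finset.filter_eq_empty_iff]
        intro x hx
        obtain ⟨y, _, rfl⟩ := Finset.mem_image.1 hx
        simp [embTriple]
      rw [hAe]
      simp only [Finset.card_empty, zero_add]
      refine Finset.card_le_one.2 ?_
      intro x hx y hy
      obtain ⟨hx1, hx2⟩ := Finset.mem_filter.1 hx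
      obtain ⟨hy1, hy2⟩ := Finset.mem_filter.1 hy
      obtain ⟨d₁, _, rfl⟩ := Finset.mem_image.1 hx1
      obtain ⟨d₂, _, rfl⟩ := Finset.mem_image.1 hy1
      simp only [hgdef, Sum.inr.injEq] at hx2 hy2
      rw [hx2, hy2]
  · -- capacities
    intro k t
    rw [Finset.filter_union]
    refine le_trans (Finset.card_union_le _ _) ?_
    cases t with
    | inl t0 =>
      have hBe : B.filter (fun x => x.2.1 = Sum.inl t0 ∧ x.2.2 = k) = ∅ := by
        rw [Finset.filter_eq_empty_iff]
        intro x hx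
        obtain ⟨d, _, rfl⟩ := Finset.mem_image.1 hx
        simp [hgdef]
      have hAf : A.filter (fun x => x.2.1 = Sum.inl t0 ∧ x.2.2 = k)
          = (π.filter (fun y => y.2.1 = t0 ∧ y.2.2 = k)).image
              (embTriple (D := Dummy φf) (T' := Fin (Ldim φf))) := by
        ext x
        simp only [hAdef, Finset.mem_filter, Finset.mem_image, embTriple]
        constructor
        · rintro ⟨⟨y, hy, rfl⟩, hj⟩
          exact ⟨y, ⟨hy, by simpa using hj⟩, rfl⟩
        · rintro ⟨y, ⟨hy, hj⟩, rfl⟩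
          exact ⟨⟨y, hy, rfl⟩, by simpa using hj⟩
      rw [hBe, hAf, Finset.card_image_of_injective _ hembinj]
      simpa [capAug] using hfeas.2.2 k t0
    | inr l =>
      have hAe : A.filter (fun x => x.2.1 = Sum.inr l ∧ x.2.2 = k) = ∅ := by
        rw [Finset.filter_eq_empty_iff]
        intro x hx
        obtain ⟨y, _, rfl⟩ := Finset.mem_image.1 hx
        simp [embTriple]
      rw [hAe]
      simp only [Finset.card_empty, zero_add, capAug]
      refine Finset.card_le_one.2 ?_
      intro x hx y hy
      obtain ⟨hx1, hx2⟩ := Finset.mem_filter.1 hx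
      obtain ⟨hy1, hy2⟩ := Finset.mem_filter.1 hy
      obtain ⟨d₁, _, rfl⟩ := Finset.mem_image.1 hx1
      obtain ⟨d₂, _, rfl⟩ := Finset.mem_image.1 hy1
      simp only [hgdef, Sum.inr.injEq] at hx2 hy2
      have : d₁ = d₂ := hfinj' d₁ d₂ (hx2.1.trans hy2.1.symm) (hx2.2.trans hy2.2.symm)
      rw [this]
  · -- company totals at most M
    intro k
    show ((A ∪ B).filter (fun x => x.2.2 = k)).card ≤ M
    rw [Finset.filter_union]
    refine le_trans (Finset.card_union_le _ _) ?_
    have hAf : (A.filter (fun x => x.2.2 = k)).card = alloc π k := by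
      have : A.filter (fun x => x.2.2 = k)
          = (π.filter (fun y => y.2.2 = k)).image
              (embTriple (D := Dummy φf) (T' := Fin (Ldim φf))) := by
        ext x
        simp only [hAdef, Finset.mem_filter, Finset.mem_image, embTriple]
        constructor
        · rintro ⟨⟨y, hy, rfl⟩, hj⟩
          exact ⟨y, ⟨hy, by simpa using hj⟩, rfl⟩
        · rintro ⟨y, ⟨hy, hj⟩, rfl⟩
          exact ⟨⟨y, hy, rfl⟩, by simpa using hj⟩
      rw [this, Finset.card_image_of_injective _ hembinj]; rfl
    have hBf : B.filter (fun x => x.2.2 = k)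
        = ((Finset.univ : Finset (Dummy φf)).filter (fun d => f d = k)).image g := by
      ext x
      constructor
      · intro hx
        obtain ⟨hx1, hx2⟩ := Finset.mem_filter.1 hx
        obtain ⟨d, -, rfl⟩ := Finset.mem_image.1 hx1
        exact Finset.mem_image.2 ⟨d, Finset.mem_filter.2
          ⟨Finset.mem_univ d, by simpa [hgdef] using hx2⟩, rfl⟩
      · intro hx
        obtain ⟨d, hd, rfl⟩ := Finset.mem_image.1 hx
        obtain ⟨-, hdk⟩ := Finset.mem_filter.1 hd
        exact Finset.mem_filter.2 ⟨Finset.mem_image.2 ⟨d, Finset.mem_univ d, rfl⟩,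
          by simpa [hgdef] using hdk⟩
    have hBcard : (B.filter (fun x => x.2.2 = k)).card ≤ (M - H) - (alloc π k - H) := by
      rw [hBf, Finset.card_image_of_injective _ hginj]
      have hinj : Set.InjOn (Sigma.fst : Dummy φf → Fin (Ldim φf))
          ↑((Finset.univ : Finset (Dummy φf)).filter (fun d => f d = k)) := by
        intro d₁ hd₁ d₂ hd₂ h
        simp only [Finset.coe_filter, Set.mem_setOf_eq] at hd₁ hd₂
        exact hfinj' d₁ d₂ h (hd₁.2.trans hd₂.2.symm)
      rw [← Finset.card_image_of_injOn hinj]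
      have hsub : ((Finset.univ : Finset (Dummy φf)).filter
            (fun d => f d = k)).image Sigma.fst
          ⊆ Finset.univ.filter (fun l : Fin (Ldim φf) => alloc π k - H ≤ (l : ℕ)) := by
        intro l hl
        obtain ⟨d, hd, rfl⟩ := Finset.mem_image.1 hl
        obtain ⟨-, hdk⟩ := Finset.mem_filter.1 hd
        have := hfS d
        rw [hdk] at this
        have := (Finset.mem_filter.1 this).2
        simp only [Finset.mem_filter, Finset.mem_univ, true_and]
        omega
      calc _ ≤ _ := Finset.card_le_card hsub
        _ = Ldim φf - (alloc π k - H) := card_filter_fin_le' _ _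
        _ = (M - H) - (alloc π k - H) := by rw [hLdim]
    rw [hAf]
    have h1 := hH k
    have h2 := hM k
    omega
  · -- every dummy job assigned
    intro d
    exact ⟨g d, Finset.mem_union_right _ (Finset.mem_image_of_mem g (Finset.mem_univ d)), rfl⟩
  · -- cardinality
    rw [Finset.card_union_of_disjoint hdisj, hAdef, hBdef,
      Finset.card_image_of_injective _ hembinj, Finset.card_image_of_injective _ hginj,
      Finset.card_univ, hmax]
  · -- cost
    rw [cost, Finset.sum_union hdisj, hAdef, hBdef,
      Finset.sum_image (fun x _ y _ h => hembinj h),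
      Finset.sum_image (fun x _ y _ h => hginj h)]
    have hB0 : ∀ d : Dummy φf,
        costAug c φf (g d).1 (g d).2.1 (g d).2.2 = 0 := by
      intro d; rfl
    simp only [hB0, Finset.sum_const_zero, add_zero]
    rfl
end

section
/- Lemma 4 (main correctness result, allocation-level form): if π' is a feasible allocation of P' with Z(π') = Z'_max whose cost is minimal among all feasible allocations of P' attaining Z'_max, then its real restriction π is a feasible allocation of P with Z(π) = Z_max that is max-lexmin fair and whose cost is minimal among all max-lexmin fair feasible allocations of P attaining Z_max; in other words, removing the dummy jobs from a minimum-cost maximum allocation of P' yields an optimal solution to the max-lexmin fair minimum cost allocation problem for P. -/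
lemma head!_eq_getElem {φ : List ℕ} (h : φ ≠ []) :
    φ.head! = φ[0]'(List.length_pos_iff.2 h) := by
  cases φ with
  | nil => exact absurd rfl h
  | cons a l => rfl

lemma getLast!_eq_getElem {φ : List ℕ} (h : φ ≠ []) :
    φ.getLast! = φ[φ.length - 1]'(by have := List.length_pos_iff.2 h; omega) := by
  rw [List.getLast!_eq_getElem!]
  exact getElem!_pos φ (φ.length - 1) _

lemma sorted_getElem_le {φ : List ℕ} (hs : φ.Pairwise (· ≤ ·)) {i j : ℕ}
    (hij : i ≤ j) (hj : j < φ.length) :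
    φ[i]'(lt_of_le_of_lt hij hj) ≤ φ[j] := by
  rcases eq_or_lt_of_le hij with rfl | hlt
  · exact le_rfl
  · exact List.Pairwise.rel_get_of_lt hs (by exact hlt)

lemma sorted_head_le {φ : List ℕ} (hs : φ.Pairwise (· ≤ ·)) {i : ℕ} (hi : i < φ.length) :
    φ.head! ≤ φ[i] := by
  have h : φ ≠ [] := List.ne_nil_of_length_pos (by omega)
  rw [head!_eq_getElem h]
  exact sorted_getElem_le hs (Nat.zero_le i) hi

lemma sorted_le_getLast {φ : List ℕ} (hs : φ.Pairwise (· ≤ ·)) {i : ℕ} (hi : i < φ.length) :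
    φ[i] ≤ φ.getLast! := by
  have h : φ ≠ [] := List.ne_nil_of_length_pos (by omega)
  rw [getLast!_eq_getElem h]
  exact sorted_getElem_le hs (by omega) (by omega)

/-- In a sorted list, the entries `< v` form a prefix: index `i` is below the
count of entries `< v` iff the `i`-th entry is `< v`. -/
lemma lt_filter_length_iff {φ : List ℕ} (hs : φ.Pairwise (· ≤ ·)) {i : ℕ}
    (hi : i < φ.length) (v : ℕ) :
    i < (List.filter (fun x => decide (x < v)) φ).length ↔ φ[i] < v := by
  rw [← List.countP_eq_length_filter]
  constructor
  · intro h
    by_contra hge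
    push_neg at hge
    have hsplit := List.take_append_drop i φ
    have hcount : List.countP (fun x => decide (x < v)) φ
        = List.countP (fun x => decide (x < v)) (φ.take i)
          + List.countP (fun x => decide (x < v)) (φ.drop i) := by
      conv_lhs => rw [← hsplit]
      exact List.countP_append
    have hdrop : List.countP (fun x => decide (x < v)) (φ.drop i) = 0 := by
      rw [List.countP_eq_zero]
      intro a ha
      obtain ⟨j, hj, rfl⟩ := List.getElem_of_mem ha
      have hjlen : i + j < φ.length := by
        rw [List.length_drop] at hj; omega
      have heq : (List.drop i φ)[j] = φ[i + j]'hjlen := List.getElem_drop ..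
      rw [heq]
      have : φ[i] ≤ φ[i + j] := sorted_getElem_le hs (by omega) hjlen
      simp only [decide_eq_true_eq]
      omega
    have htake : List.countP (fun x => decide (x < v)) (φ.take i) ≤ i := by
      calc List.countP (fun x => decide (x < v)) (φ.take i) ≤ (φ.take i).length :=
            List.countP_le_length
        _ ≤ i := by rw [List.length_take]; omega
    omega
  · intro h
    have hsplit := List.take_append_drop (i + 1) φ
    have hcount : List.countP (fun x => decide (x < v)) φ
        = List.countP (fun x => decide (x < v)) (φ.take (i + 1))
          + List.countP (fun x => decide (x < v)) (φ.drop (i + 1)) := by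
      conv_lhs => rw [← hsplit]
      exact List.countP_append
    have htake : List.countP (fun x => decide (x < v)) (φ.take (i + 1)) = i + 1 := by
      have hlen : (φ.take (i + 1)).length = i + 1 := by
        rw [List.length_take]; omega
      have hall : List.countP (fun x => decide (x < v)) (φ.take (i + 1))
          = (φ.take (i + 1)).length := by
        rw [List.countP_eq_length]
        intro a ha
        obtain ⟨j, hj, rfl⟩ := List.getElem_of_mem ha
        have hji : j ≤ i := by
          have := hj; rw [List.length_take] at this; omega
        have heq : (List.take (i + 1) φ)[j] = φ[j]'(lt_of_le_of_lt hji hi) :=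
          List.getElem_take ..
        rw [heq]
        have : φ[j] ≤ φ[i] := sorted_getElem_le hs hji hi
        simp only [decide_eq_true_eq]
        omega
      rw [hall, hlen]
    omega

lemma card_fin_filter_le (L c : ℕ) :
    ((Finset.univ : Finset (Fin L)).filter (fun l : Fin L => c ≤ (l : ℕ))).card = L - c := by
  have himg : ((Finset.univ : Finset (Fin L)).filter (fun l : Fin L => c ≤ (l : ℕ))).image Fin.val
      = Finset.Ico c L := by
    ext x
    simp only [Finset.mem_image, Finset.mem_filter, Finset.mem_univ, true_and, Finset.mem_Ico]
    constructor
    · rintro ⟨l, hl, rfl⟩; exact ⟨hl, l.2⟩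
    · rintro ⟨h1, h2⟩; exact ⟨⟨x, h2⟩, h1, rfl⟩
  rw [← Nat.card_Ico c L, ← himg,
    Finset.card_image_of_injective _ Fin.val_injective]

lemma lt_layerSize_iff {φ : List ℕ} (hs : φ.Pairwise (· ≤ ·)) {i : ℕ}
    (hi : i < φ.length) (l : ℕ) :
    i < layerSize φ l ↔ φ[i] < φ.head! + l + 1 :=
  lt_filter_length_iff hs hi _

lemma take_sum_eq (φ : List ℕ) : ∀ m, m ≤ φ.length →
    (φ.take m).sum = ∑ j ∈ Finset.range m, φ.getD j 0 := by
  intro m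
  induction m with
  | zero => simp
  | succ i ih =>
    intro h
    rw [List.sum_take_succ _ i (by omega), Finset.sum_range_succ, ih (by omega),
      List.getD_eq_getElem _ _ (by omega)]

lemma lex_exists_take_sum : ∀ {ψ φ : List ℕ}, List.Lex (· < ·) ψ φ →
    ψ.length = φ.length → ∃ m, m ≤ ψ.length ∧ (ψ.take m).sum < (φ.take m).sum := by
  intro ψ φ h
  induction h with
  | nil => intro hlen; simp at hlen
  | @cons a l1 l2 h ih =>
    intro hlen
    obtain ⟨m, hm, hlt⟩ := ih (by simpa using hlen)
    exact ⟨m + 1, by simpa using hm, by simpa using hlt⟩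
  | @rel a l1 b l2 hab =>
    intro _
    exact ⟨1, by simp, by simpa using hab⟩

lemma sum_prefix_layers {φ : List ℕ} (hs : φ.Pairwise (· ≤ ·)) (hne : φ ≠ []) {m : ℕ}
    (hm : m ≤ φ.length) :
    (∑ j ∈ Finset.range m, φ.getD j 0)
      + (∑ l : Fin (Ldim φ), min (layerSize φ l) m) = m * φ.getLast! := by
  have hpos : 0 < φ.length := List.length_pos_iff.2 hne
  have hhl : φ.head! + Ldim φ = φ.getLast! := by
    have h0 : φ.head! ≤ φ.getLast! := by
      rw [head!_eq_getElem hne]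
      exact sorted_le_getLast hs (by omega)
    unfold Ldim
    omega
  have hsum2 : (∑ l : Fin (Ldim φ), min (layerSize φ l) m)
      = ∑ j ∈ Finset.range m, (Finset.univ.filter
          (fun l : Fin (Ldim φ) => j < layerSize φ l)).card := by
    have h1 : ∀ l : Fin (Ldim φ), min (layerSize φ l) m
        = ∑ j ∈ Finset.range m, (if j < layerSize φ (l : ℕ) then 1 else 0) := by
      intro l
      have h2 : (Finset.range m).filter (fun j => j < layerSize φ l)
          = Finset.range (min (layerSize φ l) m) := by
        ext x
        simp only [Finset.mem_filter, Finset.mem_range]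
        omega
      rw [← Finset.sum_filter, h2]
      simp
    rw [Finset.sum_congr rfl (fun l _ => h1 l), Finset.sum_comm]
    exact Finset.sum_congr rfl (fun j _ => by rw [Finset.card_filter])
  rw [hsum2, ← Finset.sum_add_distrib]
  have key : ∀ j ∈ Finset.range m, φ.getD j 0 + (Finset.univ.filter
      (fun l : Fin (Ldim φ) => j < layerSize φ l)).card = φ.getLast! := by
    intro j hj
    have hjlen : j < φ.length := lt_of_lt_of_le (Finset.mem_range.1 hj) hm
    have hfil : Finset.univ.filter (fun l : Fin (Ldim φ) => j < layerSize φ l)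
        = Finset.univ.filter (fun l : Fin (Ldim φ) =>
            φ[j] - φ.head! ≤ (l : ℕ)) := by
      apply Finset.filter_congr
      intro l _
      rw [lt_layerSize_iff hs hjlen]
      constructor
      · intro h; omega
      · intro h; omega
    rw [hfil, card_fin_filter_le]
    have h1 : φ.head! ≤ φ[j] := sorted_head_le hs hjlen
    have h2 : φ[j] ≤ φ.getLast! := sorted_le_getLast hs hjlen
    rw [List.getD_eq_getElem _ _ hjlen]
    omega
  rw [Finset.sum_congr rfl key, Finset.sum_const, Finset.card_range, smul_eq_mul]

set_option linter.unusedSectionVars false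
set_option linter.unnecessarySeqFocus false

section Main


variable {J T K : Type*} [DecidableEq J] [DecidableEq T] [DecidableEq K]

/-! ### Generic facts about allocations -/

lemma fst_injOn {A B C : Type*} [DecidableEq A] [DecidableEq B] [DecidableEq C]
    {π : Finset (A × B × C)}
    (h : ∀ j : A, (π.filter (fun x => x.1 = j)).card ≤ 1) :
    Set.InjOn Prod.fst (π : Set (A × B × C)) := by
  intro x hx y hy hxy
  by_contra hne
  have hsub : {x, y} ⊆ π.filter (fun z => z.1 = x.1) := by
    intro z hz
    simp only [Finset.mem_insert, Finset.mem_singleton] at hz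
    rcases hz with rfl | rfl
    · exact Finset.mem_filter.2 ⟨Finset.mem_coe.1 hx, rfl⟩
    · exact Finset.mem_filter.2 ⟨Finset.mem_coe.1 hy, hxy.symm⟩
  have h2 : 2 ≤ (π.filter (fun z => z.1 = x.1)).card := by
    calc 2 = ({x, y} : Finset (A × B × C)).card := (Finset.card_pair hne).symm
      _ ≤ _ := Finset.card_le_card hsub
  have := h x.1
  omega

lemma card_eq_sum_alloc [Fintype K] (π : Finset (J × T × K)) :
    π.card = ∑ k, alloc π k :=
  Finset.card_eq_sum_card_fiberwise (fun x _ => Finset.mem_univ x.2.2)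

lemma le_Zmax [Fintype J] [Fintype T] [Fintype K]
    {b : J → T → K → Prop} {n : K → T → ℕ} {σ : Finset (J × T × K)}
    (h : Feasible b n σ) : σ.card ≤ Zmax b n :=
  le_csSup ⟨Fintype.card (J × T × K), by
    rintro z ⟨π, -, rfl⟩
    exact le_trans (Finset.card_le_univ π) (le_of_eq Finset.card_univ)⟩ ⟨σ, h, rfl⟩

lemma le_ZmaxAug [Fintype J] [Fintype T] [Fintype K]
    {b : J → T → K → Prop} {n : K → T → ℕ} {φf : List ℕ}
    {σ : Finset ((J ⊕ Dummy φf) × (T ⊕ Fin (Ldim φf)) × K)}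
    (h : FeasibleAug b n φf σ) : σ.card ≤ ZmaxAug b n φf :=
  le_csSup ⟨Fintype.card ((J ⊕ Dummy φf) × (T ⊕ Fin (Ldim φf)) × K), by
    rintro z ⟨π, -, rfl⟩
    exact le_trans (Finset.card_le_univ π) (le_of_eq Finset.card_univ)⟩ ⟨σ, h, rfl⟩

/-! ### sortedVec facts -/

lemma sortedVec_coe [Fintype K] (π : Finset (J × T × K)) :
    ((sortedVec π : List ℕ) : Multiset ℕ) = Finset.univ.val.map (fun k => alloc π k) :=
  Multiset.sort_eq _ _

lemma sortedVec_sorted [Fintype K] (π : Finset (J × T × K)) :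
    (sortedVec π).Pairwise (· ≤ ·) := Multiset.pairwise_sort _ _

lemma sortedVec_length [Fintype K] (π : Finset (J × T × K)) :
    (sortedVec π).length = Fintype.card K := by
  unfold sortedVec
  rw [Multiset.length_sort]
  simp

lemma sortedVec_sum [Fintype K] (π : Finset (J × T × K)) :
    (sortedVec π).sum = π.card := by
  have h := congrArg Multiset.sum (sortedVec_coe π)
  rw [Multiset.sum_coe] at h
  rw [h, card_eq_sum_alloc]
  rfl

lemma card_alloc_lt [Fintype K] (π : Finset (J × T × K)) (v : ℕ) :
    (Finset.univ.filter (fun k => alloc π k < v)).card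
      = ((sortedVec π).filter (fun x => decide (x < v))).length := by
  rw [← List.countP_eq_length_filter, ← Multiset.coe_countP, sortedVec_coe,
    Multiset.countP_map]
  rfl

lemma exists_subset_take [Fintype K] (π : Finset (J × T × K)) {m : ℕ}
    (hm : m ≤ Fintype.card K) :
    ∃ S : Finset K, S.card = m ∧ ∑ k ∈ S, alloc π k = ((sortedVec π).take m).sum := by
  classical
  have hperm : (sortedVec π).Perm (Finset.univ.toList.map (fun k => alloc π k)) := by
    rw [← Multiset.coe_eq_coe, sortedVec_coe, ← Finset.coe_toList Finset.univ,
      Multiset.map_coe]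
  have hsub : ((sortedVec π).take m).Subperm
      (Finset.univ.toList.map (fun k => alloc π k)) :=
    ((List.take_sublist m (sortedVec π)).subperm).trans hperm.subperm
  obtain ⟨u, hu_perm, hu_sub⟩ := hsub
  obtain ⟨ks, hks_sub, rfl⟩ := List.sublist_map_iff.1 hu_sub
  have hnodup : ks.Nodup := (Finset.nodup_toList _).sublist hks_sub
  have hlen : ks.length = m := by
    have h1 := hu_perm.length_eq
    rw [List.length_map, List.length_take, sortedVec_length] at h1
    omega
  refine ⟨ks.toFinset, ?_, ?_⟩
  · rw [List.toFinset_card_of_nodup hnodup, hlen]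
  · rw [List.sum_toFinset _ hnodup]
    exact hu_perm.sum_eq


/-! ### restrict facts -/

lemma mem_restrict {D T' : Type*} {π' : Finset ((J ⊕ D) × (T ⊕ T') × K)}
    {j : J} {t : T} {k : K} :
    (j, t, k) ∈ _root_.restrict π' ↔ (Sum.inl j, Sum.inl t, k) ∈ π' := by
  unfold _root_.restrict
  rw [Finset.mem_filterMap]
  constructor
  · rintro ⟨⟨j' | d, t' | l, k'⟩, hmem, h⟩ <;> simp_all
  · intro h
    exact ⟨(Sum.inl j, Sum.inl t, k), h, rfl⟩

lemma embTriple_injective {D T' : Type*} :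
    Function.Injective (embTriple (J := J) (T := T) (K := K) (D := D) (T' := T')) := by
  rintro ⟨j, t, k⟩ ⟨j', t', k'⟩ h
  simp_all [embTriple, Prod.ext_iff]

section Aug

variable [Fintype J] [Fintype T] [Fintype K]
variable {b : J → T → K → Prop} {n : K → T → ℕ} {φf : List ℕ}
variable {π' : Finset ((J ⊕ Dummy φf) × (T ⊕ Fin (Ldim φf)) × K)}

lemma embTriple_inj' : Function.Injective
    (embTriple (J := J) (T := T) (K := K) (D := Dummy φf) (T' := Fin (Ldim φf))) :=
  embTriple_injective

lemma feasible_restrict (h : Feasible (bidAug b φf) (capAug n φf) π') :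
    Feasible b n (_root_.restrict π') := by
  obtain ⟨hb, hj, hc⟩ := h
  refine ⟨?_, ?_, ?_⟩
  · rintro ⟨j, t, k⟩ hx
    exact hb _ (mem_restrict.1 hx)
  · intro j
    refine le_trans (Finset.card_le_card_of_injOn embTriple ?_
      (embTriple_injective.injOn)) (hj (Sum.inl j))
    rintro ⟨j', t, k⟩ hx
    rw [Finset.mem_coe, Finset.mem_filter] at hx ⊢
    obtain ⟨hx1, hx2⟩ := hx
    simp only at hx2
    subst hx2
    exact ⟨mem_restrict.1 hx1, rfl⟩
  · intro k t
    refine le_trans (Finset.card_le_card_of_injOn embTriple ?_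
      (embTriple_injective.injOn)) (hc k (Sum.inl t))
    rintro ⟨j', t', k'⟩ hx
    rw [Finset.mem_coe, Finset.mem_filter] at hx ⊢
    obtain ⟨hx1, hx2, hx3⟩ := hx
    simp only at hx2 hx3
    subst hx2; subst hx3
    exact ⟨mem_restrict.1 hx1, rfl, rfl⟩

lemma decomp (hb : ∀ x ∈ π', bidAug b φf x.1 x.2.1 x.2.2) :
    π' = (_root_.restrict π').image embTriple ∪ π'.filter (fun x => x.1.isRight) := by
  ext ⟨j | d, t | l, k⟩
  · simp only [Finset.mem_union, Finset.mem_image, Finset.mem_filter, embTriple]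
    constructor
    · intro h
      exact Or.inl ⟨(j, t, k), mem_restrict.2 h, rfl⟩
    · rintro (⟨⟨j', t', k'⟩, hmem, heq⟩ | ⟨hmem, hright⟩)
      · obtain ⟨h1, h2, h3⟩ : Sum.inl j' = (Sum.inl j : J ⊕ Dummy φf)
            ∧ Sum.inl t' = (Sum.inl t : T ⊕ Fin (Ldim φf)) ∧ k' = k := by
          simpa [embTriple, Prod.ext_iff] using heq
        simp only [Sum.inl.injEq] at h1 h2
        subst h1; subst h2; subst h3
        exact mem_restrict.1 hmem
      · simp at hright
  · constructor
    · intro h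
      exact absurd (hb _ h) (by simp [bidAug])
    · intro h
      simp only [Finset.mem_union, Finset.mem_image, Finset.mem_filter] at h
      rcases h with ⟨⟨j', t', k'⟩, _, heq⟩ | ⟨hmem, _⟩
      · exact absurd heq (by simp [embTriple])
      · exact absurd (hb _ hmem) (by simp [bidAug])
  · constructor
    · intro h
      exact absurd (hb _ h) (by simp [bidAug])
    · intro h
      simp only [Finset.mem_union, Finset.mem_image, Finset.mem_filter] at h
      rcases h with ⟨⟨j', t', k'⟩, _, heq⟩ | ⟨hmem, _⟩
      · exact absurd heq (by simp [embTriple])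
      · exact hmem
  · constructor
    · intro h
      simp only [Finset.mem_union, Finset.mem_filter]
      exact Or.inr ⟨h, rfl⟩
    · intro h
      simp only [Finset.mem_union, Finset.mem_image, Finset.mem_filter] at h
      rcases h with ⟨⟨j', t', k'⟩, _, heq⟩ | ⟨hmem, _⟩
      · exact absurd heq (by simp [embTriple])
      · exact hmem

lemma disj_decomp :
    Disjoint ((_root_.restrict π').image embTriple)
      (π'.filter (fun x => x.1.isRight)) := by
  rw [Finset.disjoint_left]
  rintro x hx hy
  obtain ⟨⟨j, t, k⟩, -, rfl⟩ := Finset.mem_image.1 hx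
  have := (Finset.mem_filter.1 hy).2
  simp [embTriple] at this

lemma card_decomp (hb : ∀ x ∈ π', bidAug b φf x.1 x.2.1 x.2.2) :
    π'.card = (_root_.restrict π').card + (π'.filter (fun x => x.1.isRight)).card := by
  conv_lhs => rw [decomp hb]
  rw [Finset.card_union_of_disjoint disj_decomp,
    Finset.card_image_of_injective _ embTriple_injective]

lemma dummy_card_le (hj : ∀ j, (π'.filter (fun x => x.1 = j)).card ≤ 1) :
    (π'.filter (fun x => x.1.isRight)).card ≤ Fintype.card (Dummy φf) := by
  have h1 : (π'.filter (fun x => x.1.isRight)).card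
      = ((π'.filter (fun x => x.1.isRight)).image Prod.fst).card := by
    rw [Finset.card_image_of_injOn ((fst_injOn hj).mono (by
      intro x hx
      exact Finset.mem_coe.2 (Finset.filter_subset _ _ (Finset.mem_coe.1 hx))))]
  rw [h1]
  calc ((π'.filter (fun x => x.1.isRight)).image Prod.fst).card
      ≤ ((Finset.univ : Finset (Dummy φf)).image Sum.inr).card := by
        apply Finset.card_le_card
        intro x hx
        obtain ⟨⟨jd, t', k'⟩, hy, rfl⟩ := Finset.mem_image.1 hx
        have hr := (Finset.mem_filter.1 hy).2
        cases jd with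
        | inl j => simp at hr
        | inr d => exact Finset.mem_image.2 ⟨d, Finset.mem_univ _, rfl⟩
    _ = Fintype.card (Dummy φf) := by
        rw [Finset.card_image_of_injective _ Sum.inr_injective, Finset.card_univ]

lemma alloc_decomp (hb : ∀ x ∈ π', bidAug b φf x.1 x.2.1 x.2.2) (k : K) :
    alloc π' k = alloc (_root_.restrict π') k
      + (π'.filter (fun x => x.1.isRight ∧ x.2.2 = k)).card := by
  unfold alloc
  conv_lhs => rw [decomp hb]
  rw [Finset.filter_union,
    Finset.card_union_of_disjoint
      (disj_decomp.mono (Finset.filter_subset _ _) (Finset.filter_subset _ _)),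
    Finset.filter_image, Finset.card_image_of_injective _ embTriple_injective,
    Finset.filter_filter]
  rfl

lemma dummy_filter_eq_layers (hb : ∀ x ∈ π', bidAug b φf x.1 x.2.1 x.2.2) (k : K) :
    (π'.filter (fun x => x.1.isRight ∧ x.2.2 = k)).card
      = ∑ l : Fin (Ldim φf),
          (π'.filter (fun x => x.2.1 = Sum.inr l ∧ x.2.2 = k)).card := by
  have hfib : (π'.filter (fun x => x.1.isRight ∧ x.2.2 = k)).card
      = ∑ t' : T ⊕ Fin (Ldim φf), ((π'.filter (fun x => x.1.isRight ∧ x.2.2 = k)).filter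
          (fun x => x.2.1 = t')).card :=
    Finset.card_eq_sum_card_fiberwise (fun x _ => Finset.mem_univ x.2.1)
  rw [hfib, Fintype.sum_sum_type]
  have hleft : ∀ t : T, ((π'.filter (fun x => x.1.isRight ∧ x.2.2 = k)).filter
      (fun x => x.2.1 = Sum.inl t)) = ∅ := by
    intro t
    rw [Finset.eq_empty_iff_forall_notMem]
    rintro ⟨jd, t', k'⟩ hx
    simp only [Finset.mem_filter] at hx
    obtain ⟨⟨hmem, hr, hk⟩, ht⟩ := hx
    cases jd with
    | inl j => simp at hr
    | inr d =>
      subst ht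
      exact hb _ hmem
  have hright : ∀ l : Fin (Ldim φf), ((π'.filter (fun x => x.1.isRight ∧ x.2.2 = k)).filter
      (fun x => x.2.1 = Sum.inr l)) = π'.filter (fun x => x.2.1 = Sum.inr l ∧ x.2.2 = k) := by
    intro l
    ext ⟨jd, t', k'⟩
    simp only [Finset.mem_filter]
    constructor
    · rintro ⟨⟨h1, h2, h3⟩, h4⟩
      exact ⟨h1, h4, h3⟩
    · rintro ⟨h1, h2, h3⟩
      refine ⟨⟨h1, ?_, h3⟩, h2⟩
      have hbid := hb _ h1
      subst h2
      cases jd with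
      | inl j => exact absurd hbid (by simp [bidAug])
      | inr d => rfl
  simp only [hleft, hright, Finset.card_empty, Finset.sum_const_zero, zero_add]

lemma layer_card_le (hb : ∀ x ∈ π', bidAug b φf x.1 x.2.1 x.2.2)
    (hj : ∀ j, (π'.filter (fun x => x.1 = j)).card ≤ 1) (l : Fin (Ldim φf)) :
    (π'.filter (fun x => x.2.1 = Sum.inr l)).card ≤ layerSize φf l := by
  have hinj : Function.Injective (fun i : Fin (layerSize φf l) =>
      (Sum.inr ⟨l, i⟩ : J ⊕ Dummy φf)) := by
    intro i j h
    simpa using h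
  have htar : ((Finset.univ : Finset (Fin (layerSize φf l))).image
      (fun i => (Sum.inr ⟨l, i⟩ : J ⊕ Dummy φf))).card = layerSize φf l := by
    rw [Finset.card_image_of_injective _ hinj, Finset.card_univ, Fintype.card_fin]
  rw [← htar]
  apply Finset.card_le_card_of_injOn Prod.fst
  · rintro ⟨jd, t', k'⟩ hx
    obtain ⟨hmem, ht⟩ := Finset.mem_filter.1 hx
    have hbid := hb _ hmem
    subst ht
    cases jd with
    | inl j => exact absurd hbid (by simp [bidAug])
    | inr d =>
      have hd : d.1 = l := hbid
      rcases d with ⟨l', i⟩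
      simp only at hd
      subst hd
      exact Finset.mem_image.2 ⟨i, Finset.mem_univ _, rfl⟩
  · exact (fst_injOn hj).mono (by
      intro x hx
      exact Finset.mem_coe.2 (Finset.filter_subset _ _ (Finset.mem_coe.1 hx)))

lemma sum_dummy_le (hb : ∀ x ∈ π', bidAug b φf x.1 x.2.1 x.2.2)
    (hj : ∀ j, (π'.filter (fun x => x.1 = j)).card ≤ 1)
    (hcap : ∀ (k : K) (t : T ⊕ Fin (Ldim φf)),
      (π'.filter (fun x => x.2.1 = t ∧ x.2.2 = k)).card ≤ capAug n φf k t)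
    (S : Finset K) :
    ∑ k ∈ S, (π'.filter (fun x => x.1.isRight ∧ x.2.2 = k)).card
      ≤ ∑ l : Fin (Ldim φf), min (layerSize φf l) S.card := by
  have h1 : ∀ k ∈ S, (π'.filter (fun x => x.1.isRight ∧ x.2.2 = k)).card
      = ∑ l : Fin (Ldim φf), (π'.filter (fun x => x.2.1 = Sum.inr l ∧ x.2.2 = k)).card :=
    fun k _ => dummy_filter_eq_layers hb k
  rw [Finset.sum_congr rfl h1, Finset.sum_comm]
  apply Finset.sum_le_sum
  intro l _
  refine le_min ?_ ?_
  · -- bounded by the layer size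
    have hsub : π'.filter (fun x => x.2.1 = Sum.inr l ∧ x.2.2 ∈ S)
        ⊆ π'.filter (fun x => x.2.1 = Sum.inr l) := by
      intro x hx
      obtain ⟨h1, h2a, -⟩ := Finset.mem_filter.1 hx
      exact Finset.mem_filter.2 ⟨h1, h2a⟩
    have h2 : (π'.filter (fun x => x.2.1 = Sum.inr l ∧ x.2.2 ∈ S)).card
        = ∑ k ∈ S, (π'.filter (fun x => x.2.1 = Sum.inr l ∧ x.2.2 = k)).card := by
      rw [Finset.card_eq_sum_card_fiberwise
        (f := fun x => x.2.2) (t := S) (fun x hx => (Finset.mem_filter.1 hx).2.2)]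
      apply Finset.sum_congr rfl
      intro k hk
      congr 1
      ext x
      simp only [Finset.mem_filter]
      constructor
      · rintro ⟨⟨h1, h2a, h2b⟩, h3⟩
        exact ⟨h1, h2a, h3⟩
      · rintro ⟨h1, h2a, h3⟩
        exact ⟨⟨h1, h2a, by rw [h3]; exact hk⟩, h3⟩
    rw [← h2]
    exact le_trans (Finset.card_le_card hsub) (layer_card_le hb hj l)
  · calc ∑ k ∈ S, (π'.filter (fun x => x.2.1 = Sum.inr l ∧ x.2.2 = k)).card
        ≤ ∑ _k ∈ S, 1 := Finset.sum_le_sum (fun k _ => hcap k (Sum.inr l))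
      _ = S.card := by rw [Finset.sum_const, smul_eq_mul, mul_one]

lemma cost_restrict (hb : ∀ x ∈ π', bidAug b φf x.1 x.2.1 x.2.2) (c : J → T → K → ℕ) :
    cost (costAug c φf) π' = cost c (_root_.restrict π') := by
  unfold cost
  conv_lhs => rw [decomp hb]
  rw [Finset.sum_union disj_decomp,
    Finset.sum_image (fun x _ y _ h => embTriple_injective h)]
  have h0 : ∀ x ∈ π'.filter (fun x => x.1.isRight),
      costAug c φf x.1 x.2.1 x.2.2 = 0 := by
    rintro ⟨jd, t', k'⟩ hx
    have hr := (Finset.mem_filter.1 hx).2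
    cases jd with
    | inl j => simp at hr
    | inr d => cases t' with
      | inl t => rfl
      | inr l => rfl
  rw [Finset.sum_congr rfl h0, Finset.sum_const_zero, add_zero]
  rfl

/-- The key construction: a feasible maximum allocation of `P` whose sorted
vector is `φf` extends to a feasible allocation of `P'` using every dummy
job, with the same cost. -/
lemma exists_aug (c : J → T → K → ℕ) (hne : φf ≠ [])
    (hs : φf.Pairwise (· ≤ ·))
    {σ : Finset (J × T × K)} (hσ : Feasible b n σ) (hvec : sortedVec σ = φf) :
    ∃ σ' : Finset ((J ⊕ Dummy φf) × (T ⊕ Fin (Ldim φf)) × K),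
      FeasibleAug b n φf σ' ∧ σ'.card = σ.card + Fintype.card (Dummy φf) ∧
      cost (costAug c φf) σ' = cost c σ := by
  classical
  set Ml : Fin (Ldim φf) → Finset K :=
    fun l => Finset.univ.filter (fun k => alloc σ k < φf.head! + l + 1) with hMl_def
  have hMl : ∀ l, (Ml l).card = layerSize φf l := by
    intro l
    rw [hMl_def]
    rw [card_alloc_lt, hvec]
    rfl
  set g : (l : Fin (Ldim φf)) → Fin (layerSize φf l) → K :=
    fun l i => (((Ml l).equivFinOfCardEq (hMl l)).symm i : K) with hg_def
  have hg_mem : ∀ l i, (g l i) ∈ Ml l := fun l i =>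
    (((Ml l).equivFinOfCardEq (hMl l)).symm i).2
  have hg_inj : ∀ l, Function.Injective (g l) := by
    intro l i j h
    exact ((Ml l).equivFinOfCardEq (hMl l)).symm.injective (Subtype.coe_injective h)
  set dfun : Dummy φf → (J ⊕ Dummy φf) × (T ⊕ Fin (Ldim φf)) × K :=
    fun d => (Sum.inr d, Sum.inr d.1, g d.1 d.2) with hdfun_def
  have hdfun_inj : Function.Injective dfun := by
    intro d d' h
    have := congrArg Prod.fst h
    simpa [hdfun_def] using this
  set Δ : Finset ((J ⊕ Dummy φf) × (T ⊕ Fin (Ldim φf)) × K) :=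
    Finset.univ.image dfun with hΔ_def
  set σ' := σ.image embTriple ∪ Δ with hσ'_def
  have hdisj : Disjoint (σ.image embTriple) Δ := by
    rw [Finset.disjoint_left]
    rintro x hx hΔx
    obtain ⟨y, -, rfl⟩ := Finset.mem_image.1 hx
    obtain ⟨d, -, heq⟩ := Finset.mem_image.1 hΔx
    have := congrArg Prod.fst heq
    simp [hdfun_def, embTriple] at this
  have hmem' : ∀ x, x ∈ σ' ↔ ((∃ y ∈ σ, embTriple y = x) ∨ ∃ d, dfun d = x) := by
    intro x
    simp [hσ'_def, hΔ_def, Finset.mem_union, Finset.mem_image]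
  have hLd : φf.head! + Ldim φf = φf.getLast! := by
    have h0 : φf.head! ≤ φf.getLast! := by
      rw [head!_eq_getElem hne]
      exact sorted_le_getLast hs (List.length_pos_iff.2 hne)
    unfold Ldim
    omega
  have halloc_mem : ∀ k : K, φf.head! ≤ alloc σ k ∧ alloc σ k ≤ φf.getLast! := by
    intro k
    have hmem_k : alloc σ k ∈ φf := by
      have h1 : alloc σ k ∈ (Finset.univ.val.map (fun k => alloc σ k)) :=
        Multiset.mem_map_of_mem _ (Finset.mem_univ k)
      rw [← sortedVec_coe, hvec] at h1
      exact h1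
    obtain ⟨i, hi, hik⟩ := List.getElem_of_mem hmem_k
    exact ⟨hik ▸ sorted_head_le hs hi, hik ▸ sorted_le_getLast hs hi⟩
  refine ⟨σ', ⟨⟨?_, ?_, ?_⟩, ?_⟩, ?_, ?_⟩
  · -- bids
    rintro x hx
    rcases (hmem' x).1 hx with ⟨⟨j, t, k⟩, hy, rfl⟩ | ⟨d, rfl⟩
    · exact hσ.1 _ hy
    · exact rfl
  · -- unique jobs
    intro jd
    rw [hσ'_def, Finset.filter_union]
    cases jd with
    | inl j =>
      have hΔe : Δ.filter (fun x => x.1 = Sum.inl j) = ∅ := by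
        rw [Finset.eq_empty_iff_forall_notMem]
        intro x hx
        obtain ⟨hxΔ, hx1⟩ := Finset.mem_filter.1 hx
        obtain ⟨d, -, rfl⟩ := Finset.mem_image.1 hxΔ
        simp [hdfun_def] at hx1
      rw [hΔe, Finset.union_empty, Finset.filter_image]
      have hfe : σ.filter (fun y => (embTriple y : (J ⊕ Dummy φf) × (T ⊕ Fin (Ldim φf)) × K).1 = Sum.inl j)
          = σ.filter (fun y => y.1 = j) := by
        apply Finset.filter_congr
        intro y _
        simp [embTriple]
      rw [hfe, Finset.card_image_of_injective _ (embTriple_inj' (φf := φf))]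
      exact hσ.2.1 j
    | inr d =>
      have hie : ((σ.image embTriple : Finset ((J ⊕ Dummy φf) × (T ⊕ Fin (Ldim φf)) × K))).filter
          (fun x => x.1 = Sum.inr d) = ∅ := by
        rw [Finset.eq_empty_iff_forall_notMem]
        intro x hx
        obtain ⟨hxi, hx1⟩ := Finset.mem_filter.1 hx
        obtain ⟨y, -, rfl⟩ := Finset.mem_image.1 hxi
        simp [embTriple] at hx1
      rw [hie, Finset.empty_union]
      refine le_trans (Finset.card_le_card (fun x hx => ?_)) (le_of_eq (Finset.card_singleton (dfun d)))
      obtain ⟨hxΔ, hx1⟩ := Finset.mem_filter.1 hx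
      obtain ⟨d', -, rfl⟩ := Finset.mem_image.1 hxΔ
      have : d' = d := by simpa [hdfun_def] using hx1
      subst this
      exact Finset.mem_singleton_self _
  · -- capacities
    intro k t'
    rw [hσ'_def, Finset.filter_union]
    cases t' with
    | inl t =>
      have hΔe : Δ.filter (fun x => x.2.1 = Sum.inl t ∧ x.2.2 = k) = ∅ := by
        rw [Finset.eq_empty_iff_forall_notMem]
        intro x hx
        obtain ⟨hxΔ, hx1, -⟩ := Finset.mem_filter.1 hx
        obtain ⟨d, -, rfl⟩ := Finset.mem_image.1 hxΔ
        simp [hdfun_def] at hx1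
      rw [hΔe, Finset.union_empty, Finset.filter_image]
      have hfe : σ.filter (fun y => (embTriple y : (J ⊕ Dummy φf) × (T ⊕ Fin (Ldim φf)) × K).2.1 = Sum.inl t
            ∧ (embTriple y : (J ⊕ Dummy φf) × (T ⊕ Fin (Ldim φf)) × K).2.2 = k)
          = σ.filter (fun y => y.2.1 = t ∧ y.2.2 = k) := by
        apply Finset.filter_congr
        intro y _
        simp [embTriple]
      rw [hfe, Finset.card_image_of_injective _ (embTriple_inj' (φf := φf))]
      exact hσ.2.2 k t
    | inr l =>
      have hie : ((σ.image embTriple : Finset ((J ⊕ Dummy φf) × (T ⊕ Fin (Ldim φf)) × K))).filter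
          (fun x => x.2.1 = Sum.inr l ∧ x.2.2 = k) = ∅ := by
        rw [Finset.eq_empty_iff_forall_notMem]
        intro x hx
        obtain ⟨hxi, hx1, -⟩ := Finset.mem_filter.1 hx
        obtain ⟨y, -, rfl⟩ := Finset.mem_image.1 hxi
        simp [embTriple] at hx1
      rw [hie, Finset.empty_union]
      show _ ≤ 1
      rw [Finset.card_le_one]
      rintro x hx y hy
      obtain ⟨hxΔ, hx1, hx2⟩ := Finset.mem_filter.1 hx
      obtain ⟨hyΔ, hy1, hy2⟩ := Finset.mem_filter.1 hy
      obtain ⟨⟨lx, ix⟩, -, rfl⟩ := Finset.mem_image.1 hxΔ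
      obtain ⟨⟨ly, iy⟩, -, rfl⟩ := Finset.mem_image.1 hyΔ
      have hlx : lx = l := by simpa [hdfun_def] using hx1
      have hly : ly = l := by simpa [hdfun_def] using hy1
      subst hlx; subst hly
      have h1 : ix = iy := hg_inj _ ((hx2 : _ = k).trans (hy2 : _ = k).symm)
      rw [h1]
  · -- per-company capacity φ_max
    intro k
    have hsplit : alloc σ' k = alloc σ k + (Δ.filter (fun x => x.2.2 = k)).card := by
      unfold alloc
      rw [hσ'_def, Finset.filter_union,
        Finset.card_union_of_disjoint
          (hdisj.mono (Finset.filter_subset _ _) (Finset.filter_subset _ _)),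
        Finset.filter_image, Finset.card_image_of_injective _ (embTriple_inj' (φf := φf))]
      rfl
    have htar : ((Finset.univ.filter (fun l : Fin (Ldim φf) =>
          alloc σ k < φf.head! + l + 1)).image
        (fun l => (Sum.inr l : T ⊕ Fin (Ldim φf)))).card
        = (Finset.univ.filter (fun l : Fin (Ldim φf) =>
            alloc σ k < φf.head! + l + 1)).card :=
      Finset.card_image_of_injective _ Sum.inr_injective
    have hΔk : (Δ.filter (fun x => x.2.2 = k)).card
        ≤ (Finset.univ.filter (fun l : Fin (Ldim φf) =>
            alloc σ k < φf.head! + l + 1)).card := by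
      rw [← htar]
      apply Finset.card_le_card_of_injOn (fun x => x.2.1)
      · intro x hx
        obtain ⟨hxΔ, hx2⟩ := Finset.mem_filter.1 hx
        obtain ⟨d, -, rfl⟩ := Finset.mem_image.1 hxΔ
        have hk : g d.1 d.2 = k := hx2
        have hmm := hg_mem d.1 d.2
        rw [hMl_def, Finset.mem_filter] at hmm
        rw [hk] at hmm
        exact Finset.mem_image.2 ⟨d.1, Finset.mem_filter.2 ⟨Finset.mem_univ _, hmm.2⟩, rfl⟩
      · intro x hx y hy hxy
        obtain ⟨hxΔ, hx2⟩ := Finset.mem_filter.1 (Finset.mem_coe.1 hx)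
        obtain ⟨hyΔ, hy2⟩ := Finset.mem_filter.1 (Finset.mem_coe.1 hy)
        obtain ⟨⟨lx, ix⟩, -, rfl⟩ := Finset.mem_image.1 hxΔ
        obtain ⟨⟨ly, iy⟩, -, rfl⟩ := Finset.mem_image.1 hyΔ
        have hl : lx = ly := by simpa [hdfun_def] using hxy
        subst hl
        have hgx : g lx ix = k := hx2
        have hgy : g lx iy = k := hy2
        have : ix = iy := hg_inj lx (by rw [hgx, hgy])
        subst this
        rfl
    have hcard_l : (Finset.univ.filter (fun l : Fin (Ldim φf) =>
        alloc σ k < φf.head! + l + 1)).card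
        = Ldim φf - (alloc σ k - φf.head!) := by
      have hcg : Finset.univ.filter (fun l : Fin (Ldim φf) =>
          alloc σ k < φf.head! + l + 1)
          = Finset.univ.filter (fun l : Fin (Ldim φf) =>
            alloc σ k - φf.head! ≤ (l : ℕ)) := by
        apply Finset.filter_congr
        intro l _
        constructor
        · intro h; omega
        · intro h; omega
      rw [hcg, card_fin_filter_le]
    obtain ⟨hb1, hb2⟩ := halloc_mem k
    omega
  · -- cardinality
    rw [hσ'_def, Finset.card_union_of_disjoint hdisj,
      Finset.card_image_of_injective _ (embTriple_inj' (φf := φf)),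
      Finset.card_image_of_injective _ hdfun_inj, Finset.card_univ]
  · -- cost
    unfold cost
    rw [hσ'_def, Finset.sum_union hdisj,
      Finset.sum_image (fun x _ y _ h => (embTriple_inj' (φf := φf)) h),
      Finset.sum_image (fun x _ y _ h => hdfun_inj h)]
    have h0 : ∀ d : Dummy φf, costAug c φf (dfun d).1 (dfun d).2.1 (dfun d).2.2 = 0 :=
      fun d => rfl
    rw [Finset.sum_congr rfl (fun d _ => h0 d), Finset.sum_const_zero, add_zero]
    rfl

end Aug

end Main


/-- Lemma 4, main correctness result: removing the dummy jobs
from a minimum-cost maximum allocation of the dummy-augmented instance `P'`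
yields an optimal solution to the max-lexmin fair minimum cost allocation
problem for `P`. -/
theorem dummyFlow_correct {J T K : Type*}
    [Fintype J] [Fintype T] [Fintype K] [Nonempty J] [Nonempty T] [Nonempty K]
    [DecidableEq J] [DecidableEq T] [DecidableEq K]
    (b : J → T → K → Prop) (c : J → T → K → ℕ) (n : K → T → ℕ)
    (φf : List ℕ) (hφf : ∃ π₀ : Finset (J × T × K),
      MaxLexminFair b n π₀ ∧ sortedVec π₀ = φf)
    (π' : Finset ((J ⊕ Dummy φf) × (T ⊕ Fin (Ldim φf)) × K))
    (hfeas' : FeasibleAug b n φf π') (hmax' : π'.card = ZmaxAug b n φf)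
    (hmin' : ∀ σ' : Finset ((J ⊕ Dummy φf) × (T ⊕ Fin (Ldim φf)) × K),
      FeasibleAug b n φf σ' → σ'.card = ZmaxAug b n φf →
        cost (costAug c φf) π' ≤ cost (costAug c φf) σ') :
    Feasible b n (restrict π') ∧
      (restrict π').card = Zmax b n ∧
      MaxLexminFair b n (restrict π') ∧
      ∀ σ : Finset (J × T × K), MaxLexminFair b n σ →
        cost c (restrict π') ≤ cost c σ := by
  classical
  obtain ⟨π₀, hfair₀, hvec₀⟩ := hφf
  have hs : φf.Pairwise (· ≤ ·) := hvec₀ ▸ sortedVec_sorted π₀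
  have hlen : φf.length = Fintype.card K := hvec₀ ▸ sortedVec_length π₀
  have hposK : 0 < Fintype.card K := Fintype.card_pos
  have hne : φf ≠ [] := List.ne_nil_of_length_pos (by omega)
  -- the total number of dummy jobs
  have hD : Fintype.card (Dummy φf) = ∑ l : Fin (Ldim φf), layerSize φf l := by
    rw [Fintype.card_sigma]
    simp
  have hDsum : (∑ l : Fin (Ldim φf), min (layerSize φf l) (Fintype.card K))
      = Fintype.card (Dummy φf) := by
    rw [hD]
    apply Finset.sum_congr rfl
    intro l _
    rw [min_eq_left]
    exact le_trans (List.length_filter_le _ _) (le_of_eq hlen)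
  have hZ : Zmax b n = π₀.card := (hfair₀.2.1).symm
  have hsum_phi : (∑ j ∈ Finset.range (Fintype.card K), φf.getD j 0) = Zmax b n := by
    rw [← hlen, ← take_sum_eq φf φf.length le_rfl, List.take_length, ← hvec₀,
      sortedVec_sum, hZ]
  have key3c : ∀ m ≤ Fintype.card K,
      (∑ j ∈ Finset.range m, φf.getD j 0)
        + (∑ l : Fin (Ldim φf), min (layerSize φf l) m) = m * φf.getLast! := by
    intro m hm
    exact sum_prefix_layers hs hne (by omega)
  have hNphi : Zmax b n + Fintype.card (Dummy φf) = Fintype.card K * φf.getLast! := by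
    have := key3c (Fintype.card K) le_rfl
    rw [hsum_phi, hDsum] at this
    exact this
  -- the exact value of ZmaxAug
  have hZA : ZmaxAug b n φf = Zmax b n + Fintype.card (Dummy φf) := by
    apply le_antisymm
    · apply csSup_le
      · obtain ⟨σ', hσ'feas, hσ'card, -⟩ :=
          exists_aug (n := n) c hne hs hfair₀.1 hvec₀
        exact ⟨σ'.card, σ', hσ'feas, rfl⟩
      · rintro z ⟨τ, hτfeas, rfl⟩
        rw [card_decomp hτfeas.1.1]
        have h1 : (_root_.restrict τ).card ≤ Zmax b n := le_Zmax (feasible_restrict hτfeas.1)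
        have h2 := dummy_card_le (π' := τ) hτfeas.1.2.1
        omega
    · obtain ⟨σ', hσ'feas, hσ'card, -⟩ :=
        exists_aug (n := n) c hne hs hfair₀.1 hvec₀
      have := le_ZmaxAug hσ'feas
      rw [hσ'card, ← hZ] at this
      exact this
  -- basic facts about π'
  have hb' := hfeas'.1.1
  have hj' := hfeas'.1.2.1
  have hcap' := hfeas'.1.2.2
  have hres_feas : Feasible b n (_root_.restrict π') := feasible_restrict hfeas'.1
  have hres_card : (_root_.restrict π').card = Zmax b n := by
    have h0 := card_decomp hb'
    rw [hmax', hZA] at h0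
    have h1 : (_root_.restrict π').card ≤ Zmax b n := le_Zmax hres_feas
    have h2 := dummy_card_le (π' := π') hj'
    omega
  -- every company is fully loaded in π'
  have halloc_full : ∀ k : K, alloc π' k = φf.getLast! := by
    have hsum : ∑ k : K, alloc π' k = ∑ k : K, φf.getLast! := by
      rw [← card_eq_sum_alloc, hmax', hZA, hNphi, Finset.sum_const, Finset.card_univ,
        smul_eq_mul]
    have := (Finset.sum_eq_sum_iff_of_le (fun k _ => hfeas'.2 k)).1 hsum
    exact fun k => this k (Finset.mem_univ k)
  -- the master inequality: prefix sums of the sorted vector of the restriction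
  -- dominate prefix sums of φf
  have hkey : ∀ m, m ≤ Fintype.card K →
      (∑ j ∈ Finset.range m, φf.getD j 0) ≤ ((sortedVec (_root_.restrict π')).take m).sum := by
    intro m hm
    obtain ⟨S, hScard, hSsum⟩ := exists_subset_take (_root_.restrict π') hm
    have h1 : (∑ k ∈ S, alloc (_root_.restrict π') k)
        + (∑ k ∈ S, (π'.filter (fun x => x.1.isRight ∧ x.2.2 = k)).card)
        = m * φf.getLast! := by
      rw [← Finset.sum_add_distrib]
      have e1 : ∀ k ∈ S, alloc (_root_.restrict π') k
          + (π'.filter (fun x => x.1.isRight ∧ x.2.2 = k)).card = φf.getLast! := by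
        intro k _
        rw [← alloc_decomp hb' k]
        exact halloc_full k
      rw [Finset.sum_congr rfl e1, Finset.sum_const, hScard, smul_eq_mul]
    have h2 : (∑ k ∈ S, (π'.filter (fun x => x.1.isRight ∧ x.2.2 = k)).card)
        ≤ ∑ l : Fin (Ldim φf), min (layerSize φf l) m := by
      have := sum_dummy_le hb' hj' hcap' S
      rw [hScard] at this
      exact this
    have h3 := key3c m hm
    omega
  -- the sorted vector of the restriction is φf
  have hvec_res : sortedVec (_root_.restrict π') = φf := by
    rcases hfair₀.2.2 (_root_.restrict π') hres_feas hres_card with heq | hlex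
    · rw [heq, hvec₀]
    · exfalso
      rw [hvec₀] at hlex
      obtain ⟨m, hm, hlt⟩ := lex_exists_take_sum hlex (by rw [sortedVec_length, hlen])
      rw [sortedVec_length] at hm
      have h4 := hkey m hm
      rw [take_sum_eq φf m (by omega)] at hlt
      omega
  -- assemble everything
  refine ⟨hres_feas, hres_card, ⟨hres_feas, hres_card, ?_⟩, ?_⟩
  · intro σ hσf hσc
    rw [hvec_res, ← hvec₀]
    exact hfair₀.2.2 σ hσf hσc
  · intro σ hσfair
    have hσvec : sortedVec σ = φf := by
      rcases hfair₀.2.2 σ hσfair.1 hσfair.2.1 with heq | hlex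
      · rw [heq, hvec₀]
      · rcases hσfair.2.2 π₀ hfair₀.1 hfair₀.2.1 with heq2 | hlex2
        · exact heq2.symm.trans hvec₀
        · exact (asymm hlex hlex2).elim
    obtain ⟨σ', hσ'feas, hσ'card, hσ'cost⟩ := exists_aug (n := n) c hne hs hσfair.1 hσvec
    have hσ'max : σ'.card = ZmaxAug b n φf := by
      rw [hσ'card, hσfair.2.1, hZA]
    calc cost c (_root_.restrict π') = cost (costAug c φf) π' := (cost_restrict hb' c).symm
      _ ≤ cost (costAug c φf) σ' := hmin' σ' hσ'feas hσ'max
      _ = cost c σ := hσ'cost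
end
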